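/- arXiv:1107.0400 — 6 statements merged into one kernel-verified Lean document; each statement's English description precedes it below -/
import Mathlib

section
/- A signed graph Γ = (G, σ) is balanced (every cycle has positive sign) if and only if Γ is switching equivalent to (G, +), the signed graph on G with all edges positive. -/
open scoped Classical

noncomputable def sadj {V : Type*} [Fintype V] [DecidableEq V]
    (G : SimpleGraph V) (σ : V → V → ℝ) : Matrix V V ℝ :=
  fun u v => if G.Adj u v then σ u v else 0

noncomputable def nullity {V : Type*} [Fintype V] [DecidableEq V]
    (A : Matrix V V ℝ) : ℕ :=
  Module.finrank ℝ (LinearMap.ker (Matrix.mulVecLin A))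

def walkSign {V : Type*} (G : SimpleGraph V) (σ : V → V → ℝ)
    {u v : V} (w : G.Walk u v) : ℝ :=
  (w.darts.map (fun d => σ d.toProd.1 d.toProd.2)).prod

def BalancedSG {V : Type*} (G : SimpleGraph V) (σ : V → V → ℝ) : Prop :=
  ∀ (u : V) (w : G.Walk u u), w.IsCycle → walkSign G σ w = 1

def IsMatchingF {V : Type*} (G : SimpleGraph V) (M : Finset (Sym2 V)) : Prop :=
  (∀ e ∈ M, e ∈ G.edgeSet) ∧
  ∀ e ∈ M, ∀ f ∈ M, e ≠ f → ∀ v : V, ¬(v ∈ e ∧ v ∈ f)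

noncomputable def matchingNumber {V : Type*} (G : SimpleGraph V) : ℕ :=
  sSup {k | ∃ M : Finset (Sym2 V), IsMatchingF G M ∧ M.card = k}

def MatchedIn {V : Type*} (G : SimpleGraph V) (u : V) : Prop :=
  ∀ M : Finset (Sym2 V), IsMatchingF G M → M.card = matchingNumber G → ∃ e ∈ M, u ∈ e

def MismatchedIn {V : Type*} (G : SimpleGraph V) (u : V) : Prop :=
  ∃ M : Finset (Sym2 V), IsMatchingF G M ∧ M.card = matchingNumber G ∧ ∀ e ∈ M, u ∉ e

namespace WS
variable {V : Type*} {G : SimpleGraph V} {σ : V → V → ℝ}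

@[simp] lemma ws_nil {u : V} : walkSign G σ (SimpleGraph.Walk.nil : G.Walk u u) = 1 := rfl

@[simp] lemma ws_cons {u v w : V} (h : G.Adj u v) (p : G.Walk v w) :
    walkSign G σ (SimpleGraph.Walk.cons h p) = σ u v * walkSign G σ p := by
  simp [walkSign]

lemma ws_append {u v w : V} (p : G.Walk u v) (q : G.Walk v w) :
    walkSign G σ (p.append q) = walkSign G σ p * walkSign G σ q := by
  simp [walkSign, SimpleGraph.Walk.darts_append]

lemma ws_copy {u v u' v' : V} (p : G.Walk u v) (hu : u = u') (hv : v = v') :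
    walkSign G σ (p.copy hu hv) = walkSign G σ p := by
  subst hu hv; rfl

lemma ws_reverse (hsym : ∀ u v, σ u v = σ v u) {u v : V} (p : G.Walk u v) :
    walkSign G σ p.reverse = walkSign G σ p := by
  rw [walkSign, SimpleGraph.Walk.darts_reverse, List.map_reverse, List.prod_reverse,
    List.map_map]
  congr 1
  apply List.map_congr_left
  intro d _
  exact (hsym d.toProd.1 d.toProd.2).symm

lemma ws_rotate {u v : V} (c : G.Walk v v) (h : u ∈ c.support) :
    walkSign G σ (c.rotate u h) = walkSign G σ c :=
  List.Perm.prod_eq (((c.rotate_darts u h).perm).map _)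

lemma ws_pm (hpm : ∀ u v, G.Adj u v → σ u v = 1 ∨ σ u v = -1) {u v : V} (p : G.Walk u v) :
    walkSign G σ p = 1 ∨ walkSign G σ p = -1 := by
  induction p with
  | nil => left; rfl
  | cons h p ih =>
    rw [ws_cons]
    rcases hpm _ _ h with h1 | h1 <;> rcases ih with h2 | h2 <;> simp [h1, h2]

lemma ws_sq (hpm : ∀ u v, G.Adj u v → σ u v = 1 ∨ σ u v = -1) {u v : V} (p : G.Walk u v) :
    walkSign G σ p * walkSign G σ p = 1 := by
  rcases ws_pm hpm p with h | h <;> rw [h] <;> norm_num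

end WS

namespace WS
open SimpleGraph Walk

lemma edge_end {V : Type*} {G : SimpleGraph V} {u v : V} (hne : u ≠ v) (p : G.Walk v u) (hnd : p.support.Nodup)
    (he : s(u, v) ∈ p.edges) : p.length = 1 := by
  induction p with
  | nil => simp at he
  | @cons a b c h q ih =>
    rw [edges_cons, List.mem_cons] at he
    rw [support_cons, List.nodup_cons] at hnd
    rcases he with he | he
    · rw [Sym2.eq_iff] at he
      rcases he with ⟨h1, h2⟩ | ⟨h1, h2⟩
      · exact absurd h1 hne
      · subst h1
        have : q = Walk.nil := (Walk.isPath_iff_eq_nil (p := q)).mp (Walk.IsPath.mk' hnd.2)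
        subst this; rfl
    · exact absurd (q.snd_mem_support_of_mem_edges he) hnd.1

lemma split_closed {x : V} (w : G.Walk x x) (h2 : 2 ≤ w.support.tail.count x) :
    ∃ (w1 w2 : G.Walk x x),
      walkSign G σ w = walkSign G σ w1 * walkSign G σ w2 ∧
      w1.length < w.length ∧ w2.length < w.length := by
  cases w with
  | nil => simp at h2
  | @cons _ y _ h p =>
    rw [support_cons, List.tail_cons] at h2
    have hx : x ∈ p.support := List.count_pos_iff.mp (by omega)
    refine ⟨Walk.cons h (p.takeUntil x hx), p.dropUntil x hx, ?_, ?_, ?_⟩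
    · rw [ws_cons, ws_cons, mul_assoc, ← ws_append, Walk.take_spec]
    all_goals {
      have hlen : (p.takeUntil x hx).length + (p.dropUntil x hx).length = p.length := by
        have := congr_arg Walk.length (p.take_spec hx)
        rwa [Walk.length_append] at this
      have hd : (p.dropUntil x hx).length ≠ 0 := by
        intro h0
        have hnil : (p.dropUntil x hx) = Walk.nil :=
          (Walk.isPath_iff_eq_nil (p := _)).mp (Walk.IsPath.mk' (by
            have : (p.dropUntil x hx).support = [x] := by
              cases hh : (p.dropUntil x hx) with
              | nil => rfl
              | cons h q => exact absurd (congr_arg Walk.length hh) (by simp [h0, hh] at h0 ⊢)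
            simp [this]))
        have hone := p.count_support_takeUntil_eq_one hx
        have hsupp := congr_arg (fun w => List.count x w.support) (p.take_spec hx)
        simp only [hnil, Walk.support_append, Walk.support_nil, List.tail_cons,
          List.append_nil] at hsupp
        rw [← hsupp] at h2
        omega
      simp only [Walk.length_cons]
      omega
    }

end WS

namespace WS
open SimpleGraph Walk

lemma closed_walk_sign {V : Type*} {G : SimpleGraph V} {σ : V → V → ℝ}
    (hsym : ∀ u v, σ u v = σ v u)
    (hpm : ∀ u v, G.Adj u v → σ u v = 1 ∨ σ u v = -1)
    (hb : BalancedSG G σ) :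
    ∀ (n : ℕ) (u : V) (w : G.Walk u u), w.length = n → walkSign G σ w = 1 := by
  intro n
  induction n using Nat.strong_induction_on with
  | _ n IH =>
    intro u w hlen
    cases w with
    | nil => rfl
    | @cons _ v _ h p =>
      set w := Walk.cons h p with hw
      by_cases h2 : 2 ≤ w.support.tail.count u
      · obtain ⟨w1, w2, hs, h1, h2'⟩ := split_closed w h2
        rw [hs, IH _ (hlen ▸ h1) _ _ rfl, IH _ (hlen ▸ h2') _ _ rfl, one_mul]
      · by_cases hnd : w.support.tail.Nodup
        · -- no repeats: either a cycle or the double edge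
          rw [hw, support_cons, List.tail_cons] at hnd
          by_cases he : s(u, v) ∈ p.edges
          · -- double edge: p has length 1
            have hp1 : p.length = 1 := edge_end h.ne p hnd he
            cases p with
            | nil => simp at hp1
            | @cons _ z _ h' q =>
              have hq : q.length = 0 := by simpa using hp1
              cases q with
              | cons _ _ => simp at hq
              | nil =>
                rw [hw, ws_cons, ws_cons, ws_nil, mul_one, hsym v u]
                rcases hpm u v h with h1 | h1 <;> rw [h1] <;> norm_num
          · exact hb u w ((Walk.cons_isCycle_iff p h).mpr ⟨Walk.IsPath.mk' hnd, he⟩)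
        · -- some vertex x ≠ u repeats: rotate and split
          rw [List.nodup_iff_count_le_one] at hnd
          push_neg at hnd
          obtain ⟨x, hx2⟩ := hnd
          have hxmem : x ∈ w.support := by
            have : x ∈ w.support.tail := List.count_pos_iff.mp (by omega)
            exact List.mem_of_mem_tail this
          set w' := w.rotate x hxmem with hw'
          have hcnt : 2 ≤ w'.support.tail.count x := by
            rw [List.Perm.count_eq (w.support_rotate x hxmem).perm]
            omega
          have hlen' : w'.length = w.length := by
            rw [← Walk.length_darts, ← Walk.length_darts]
            exact (w.rotate_darts x hxmem).perm.length_eq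
          obtain ⟨w1, w2, hs, hl1, hl2⟩ := split_closed w' hcnt
          rw [← ws_rotate w hxmem, ← hw', hs,
            IH _ (by omega) _ _ rfl, IH _ (by omega) _ _ rfl, one_mul]


end WS

open WS in
/-- Γ = (G, σ) is balanced iff Γ is switching equivalent to (G, +). -/
theorem stmt3 {V : Type*} [Fintype V] [DecidableEq V]
    (G : SimpleGraph V) (σ : V → V → ℝ)
    (hsym : ∀ u v, σ u v = σ v u)
    (hpm : ∀ u v, G.Adj u v → σ u v = 1 ∨ σ u v = -1) :
    BalancedSG G σ ↔
      ∃ θ : V → ℝ, (∀ v, θ v = 1 ∨ θ v = -1) ∧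
        ∀ u v, G.Adj u v → θ u * σ u v * θ v = 1 := by
  constructor
  · intro hb
    have hreach : ∀ v : V, G.Reachable (G.connectedComponentMk v).out v :=
      fun v => SimpleGraph.ConnectedComponent.exact ((G.connectedComponentMk v).out_eq)
    set wk : ∀ v : V, G.Walk (G.connectedComponentMk v).out v := fun v => (hreach v).some
      with hwk
    refine ⟨fun v => walkSign G σ (wk v), fun v => ws_pm hpm _, ?_⟩
    intro u v huv
    have hcomp : G.connectedComponentMk u = G.connectedComponentMk v :=
      SimpleGraph.ConnectedComponent.connectedComponentMk_eq_of_adj huv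
    have hroot : (G.connectedComponentMk u).out = (G.connectedComponentMk v).out := by
      rw [hcomp]
    set r := (G.connectedComponentMk u).out with hr
    have c : G.Walk r r :=
      ((wk u).append huv.toWalk).append ((wk v).copy hroot.symm rfl).reverse
    have hc : walkSign G σ (((wk u).append huv.toWalk).append
        ((wk v).copy hroot.symm rfl).reverse) = 1 :=
      closed_walk_sign hsym hpm hb _ r _ rfl
    rw [ws_append, ws_append, ws_reverse hsym, ws_copy] at hc
    have htw : walkSign G σ huv.toWalk = σ u v := by
      simp [SimpleGraph.Adj.toWalk]
    rw [htw] at hc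
    calc walkSign G σ (wk u) * σ u v * walkSign G σ (wk v)
        = walkSign G σ (wk u) * σ u v * walkSign G σ (wk v) := rfl
      _ = 1 := by linarith [hc]
  · intro ⟨θ, hθ, hsw⟩
    have hθsq : ∀ v, θ v * θ v = 1 := fun v => by rcases hθ v with h | h <;> rw [h] <;> norm_num
    have hσ : ∀ u v, G.Adj u v → σ u v = θ u * θ v := by
      intro u v huv
      have h1 := hsw u v huv
      rcases hθ u with hu | hu <;> rcases hθ v with hv | hv <;>
        rw [hu, hv] at h1 ⊢ <;> linarith
    have tele : ∀ (u v : V) (p : G.Walk u v), walkSign G σ p = θ u * θ v := by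
      intro u v p
      induction p with
      | nil => rw [ws_nil, hθsq]
      | @cons a b c h q ih =>
        rw [ws_cons, hσ a b h, ih, ← mul_assoc, mul_assoc (θ a), hθsq b, mul_one]
    intro u w _
    rw [tele u u w, hθsq u]
end

section
/- The nullity of the unbalanced signed cycle C_n is 2 if n ≡ 2 (mod 4) and 0 otherwise. -/
open scoped Classical

namespace Stmt9
open Finset
variable {n : ℕ} [NeZero n]

noncomputable def S (n : ℕ) [NeZero n] : ZMod n → ℝ :=
  fun i => if i = (-1 : ZMod n) then -1 else 1

lemma S_def (i : ZMod n) : S n i = if i = (-1 : ZMod n) then -1 else 1 := rfl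

lemma S_sq (i : ZMod n) : S n i * S n i = 1 := by rw [S_def]; split <;> norm_num

lemma S_cases (i : ZMod n) : S n i = 1 ∨ S n i = -1 := by rw [S_def]; split <;> simp

lemma cast_ne_neg_one (hn : 3 ≤ n) {t : ℕ} (ht : t < n - 1) : ((t : ZMod n)) ≠ -1 := by
  intro h
  have h1 : (-1 : ZMod n) = ((n - 1 : ℕ) : ZMod n) := by
    have h0 : ((n : ℕ) : ZMod n) = 0 := ZMod.natCast_self n
    push_cast [Nat.cast_sub (by omega : 1 ≤ n)]
    rw [h0]; ring
  rw [h1] at h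
  have := congrArg ZMod.val h
  rw [ZMod.val_cast_of_lt (by omega), ZMod.val_cast_of_lt (by omega)] at this
  omega

lemma S_cast_eq_one (hn : 3 ≤ n) {t : ℕ} (ht : t < n - 1) : S n ((t : ZMod n)) = 1 := by
  rw [S_def, if_neg (cast_ne_neg_one hn ht)]

lemma two_ne_zero' (hn : 3 ≤ n) : ((2 : ZMod n)) ≠ 0 := by
  intro h
  have h2 : ((2 : ℕ) : ZMod n) = ((0:ℕ) : ZMod n) := by push_cast; simpa using h
  have := congrArg ZMod.val h2
  rw [ZMod.val_cast_of_lt (by omega), ZMod.val_cast_of_lt (by omega)] at this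
  omega

variable {A : Matrix (ZMod n) (ZMod n) ℝ}

lemma mulVec_eq (hn : 3 ≤ n)
    (hA : A = fun i j =>
      if j = i + 1 then (if i = (-1 : ZMod n) then -1 else 1)
      else if i = j + 1 then (if j = (-1 : ZMod n) then -1 else 1)
      else 0) (x : ZMod n → ℝ) (i : ZMod n) :
    A.mulVec x i = S n i * x (i + 1) + S n (i - 1) * x (i - 1) := by
  have hne : i + 1 ≠ i - 1 := by
    intro h
    apply two_ne_zero' hn
    linear_combination (sub_eq_zero.mpr h)
  have key : ∀ j, A i j * x j =
      ((if j = i + 1 then S n i * x j else 0) + (if j = i - 1 then S n (i - 1) * x j else 0)) := by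
    intro j
    simp only [hA]
    by_cases h1 : j = i + 1
    · subst h1
      rw [if_pos rfl, if_pos rfl, if_neg hne, add_zero, S_def]
    · by_cases h2 : j = i - 1
      · subst h2
        have h1' : ¬ ((i - 1 : ZMod n) = i + 1) := h1
        have h3 : i = (i - 1) + 1 := by ring
        rw [if_neg h1', if_neg h1', if_pos h3, if_pos rfl, zero_add, S_def]
      · have h3 : ¬ (i = j + 1) := fun h => h2 (by rw [h]; ring)
        rw [if_neg h1, if_neg h1, if_neg h3, if_neg h2, zero_mul, add_zero]
  unfold Matrix.mulVec dotProduct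
  rw [Finset.sum_congr rfl (fun j _ => key j), Finset.sum_add_distrib,
    Finset.sum_ite_eq' univ (i+1), Finset.sum_ite_eq' univ (i-1)]
  simp

lemma ker_iff (hn : 3 ≤ n)
    (hA : A = fun i j =>
      if j = i + 1 then (if i = (-1 : ZMod n) then -1 else 1)
      else if i = j + 1 then (if j = (-1 : ZMod n) then -1 else 1)
      else 0) (x : ZMod n → ℝ) :
    x ∈ LinearMap.ker (Matrix.mulVecLin A) ↔
      ∀ i : ZMod n, S n i * x (i + 1) + S n (i - 1) * x (i - 1) = 0 := by
  rw [LinearMap.mem_ker]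
  constructor
  · intro h i
    rw [← mulVec_eq hn hA x i]
    exact congrFun h i
  · intro h
    funext i
    rw [Matrix.mulVecLin_apply, mulVec_eq hn hA x i]
    exact h i

lemma rec_step (hn : 3 ≤ n)
    (hA : A = fun i j =>
      if j = i + 1 then (if i = (-1 : ZMod n) then -1 else 1)
      else if i = j + 1 then (if j = (-1 : ZMod n) then -1 else 1)
      else 0) {x : ZMod n → ℝ} (hx : x ∈ LinearMap.ker (Matrix.mulVecLin A)) (i : ZMod n) :
    x (i + 2) = -(S n i * S n (i + 1)) * x i := by
  have h := (ker_iff hn hA x).mp hx (i + 1)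
  have h1 : i + 1 + 1 = i + 2 := by ring
  have h2 : i + 1 - 1 = i := by ring
  rw [h1, h2] at h
  rcases S_cases (n := n) (i+1) with h3 | h3 <;>
    rcases S_cases (n := n) i with h4 | h4 <;>
    rw [h3, h4] at h ⊢ <;> linarith

lemma propagate (hn : 3 ≤ n)
    (hA : A = fun i j =>
      if j = i + 1 then (if i = (-1 : ZMod n) then -1 else 1)
      else if i = j + 1 then (if j = (-1 : ZMod n) then -1 else 1)
      else 0) {x : ZMod n → ℝ} (hx : x ∈ LinearMap.ker (Matrix.mulVecLin A)) (i : ZMod n) :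
    ∀ k : ℕ, x (i + ((2 * k : ℕ) : ZMod n)) =
      ((-1 : ℝ) ^ k * ∏ t ∈ Finset.range (2 * k), S n (i + (t : ZMod n))) * x i := by
  intro k
  induction k with
  | zero => simp
  | succ k ih =>
    have hcast : ((2 * (k+1) : ℕ) : ZMod n) = ((2*k : ℕ) : ZMod n) + 2 := by push_cast; ring
    have hstep := rec_step hn hA hx (i + ((2*k : ℕ) : ZMod n))
    have h2k : 2 * (k + 1) = (2*k) + 1 + 1 := by ring
    rw [hcast, ← add_assoc, hstep, ih, h2k, Finset.prod_range_succ, Finset.prod_range_succ]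
    have e1 : i + ((2*k : ℕ) : ZMod n) + 1 = i + (((2*k+1 : ℕ)) : ZMod n) := by push_cast; ring
    rw [e1]
    ring

lemma prod_full (hn : 3 ≤ n) (i : ZMod n) :
    ∏ t ∈ Finset.range n, S n (i + (t : ZMod n)) = -1 := by
  have h : ∏ t ∈ Finset.range n, S n (i + (t : ZMod n)) = ∏ z : ZMod n, S n z := by
    refine Finset.prod_nbij' (fun t => i + (t : ZMod n)) (fun z => (z - i).val) ?_ ?_ ?_ ?_ ?_
    · intro a _; exact Finset.mem_univ _
    · intro z _; exact Finset.mem_range.mpr (ZMod.val_lt _)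
    · intro a ha
      show ((i + (a : ZMod n)) - i).val = a
      rw [add_sub_cancel_left]
      exact ZMod.val_cast_of_lt (Finset.mem_range.mp ha)
    · intro z _
      show i + (((z - i).val : ℕ) : ZMod n) = z
      rw [ZMod.natCast_rightInverse (z - i)]
      ring
    · intro a _; rfl
  rw [h]
  simp only [S_def]
  rw [Finset.prod_ite_eq' Finset.univ (-1 : ZMod n) (fun _ => (-1 : ℝ))]
  simp

end Stmt9

namespace Part2
open Stmt9
variable {n : ℕ} [NeZero n]

lemma neg_one_zmod (hn : 3 ≤ n) : (-1 : ZMod n) = ((n - 1 : ℕ) : ZMod n) := by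
  have h0 : ((n : ℕ) : ZMod n) = 0 := ZMod.natCast_self n
  push_cast [Nat.cast_sub (by omega : 1 ≤ n)]
  rw [h0]; ring

lemma eq_neg_one_iff (hn : 3 ≤ n) (i : ZMod n) : i = (-1 : ZMod n) ↔ i.val = n - 1 := by
  rw [neg_one_zmod hn]
  constructor
  · intro h; rw [h, ZMod.val_cast_of_lt (by omega)]
  · intro h
    have h2 := ZMod.natCast_rightInverse i
    rw [h] at h2
    exact h2.symm

lemma S_eq (hn : 3 ≤ n) (i : ZMod n) : S n i = if i.val = n - 1 then -1 else 1 := by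
  rw [S_def]
  by_cases h : i.val = n - 1
  · rw [if_pos ((eq_neg_one_iff hn i).mpr h), if_pos h]
  · rw [if_neg (fun hh => h ((eq_neg_one_iff hn i).mp hh)), if_neg h]

lemma val_add_one (hn : 3 ≤ n) (i : ZMod n) :
    (i + 1).val = if i.val = n - 1 then 0 else i.val + 1 := by
  have h1 : ((i.val + 1 : ℕ) : ZMod n) = i + 1 := by
    push_cast
    rw [ZMod.natCast_rightInverse i]
  rw [← h1, ZMod.val_natCast]
  have hk : i.val < n := ZMod.val_lt i
  by_cases h : i.val = n - 1
  · rw [if_pos h]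
    have : i.val + 1 = n := by omega
    rw [this, Nat.mod_self]
  · rw [if_neg h, Nat.mod_eq_of_lt (by omega)]

lemma val_sub_one (hn : 3 ≤ n) (i : ZMod n) :
    (i - 1).val = if i.val = 0 then n - 1 else i.val - 1 := by
  have h1 : ((i.val + (n - 1) : ℕ) : ZMod n) = i - 1 := by
    push_cast [Nat.cast_sub (by omega : 1 ≤ n), ZMod.natCast_self]
    rw [ZMod.natCast_rightInverse i]
    ring
  rw [← h1, ZMod.val_natCast]
  have hk : i.val < n := ZMod.val_lt i
  by_cases h : i.val = 0
  · rw [if_pos h, h, zero_add, Nat.mod_eq_of_lt (by omega)]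
  · rw [if_neg h]
    have h2 : i.val + (n - 1) = n + (i.val - 1) := by omega
    rw [h2, Nat.add_mod_left, Nat.mod_eq_of_lt (by omega)]

noncomputable def U (n : ℕ) [NeZero n] : ZMod n → ℝ :=
  fun i => if i.val % 2 = 0 then (-1 : ℝ) ^ (i.val / 2) else 0

noncomputable def V (n : ℕ) [NeZero n] : ZMod n → ℝ :=
  fun i => if i.val % 2 = 1 then (-1 : ℝ) ^ (i.val / 2) else 0

lemma U_def (i : ZMod n) : U n i = if i.val % 2 = 0 then (-1 : ℝ) ^ (i.val / 2) else 0 := rfl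
lemma V_def (i : ZMod n) : V n i = if i.val % 2 = 1 then (-1 : ℝ) ^ (i.val / 2) else 0 := rfl

lemma hpow : ∀ a : ℕ, (-1 : ℝ) ^ a = if a % 2 = 0 then 1 else -1 := by
  intro a
  rcases Nat.even_or_odd a with h | h
  · rw [Even.neg_one_pow h, if_pos (Nat.even_iff.mp h)]
  · rw [Odd.neg_one_pow h, if_neg (by simpa using Nat.odd_iff.mp h)]

variable {A : Matrix (ZMod n) (ZMod n) ℝ}

lemma U_mem {m : ℕ} (hm : n = 2 * m) (hmo : m % 2 = 1) (hn : 3 ≤ n)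
    (hA : A = fun i j =>
      if j = i + 1 then (if i = (-1 : ZMod n) then -1 else 1)
      else if i = j + 1 then (if j = (-1 : ZMod n) then -1 else 1)
      else 0) : U n ∈ LinearMap.ker (Matrix.mulVecLin A) := by
  rw [ker_iff hn hA]
  intro i
  have hk : i.val < n := ZMod.val_lt i
  rw [S_eq hn i, S_eq hn (i - 1), U_def, U_def, val_add_one hn i, val_sub_one hn i]
  simp only [hpow]
  split_ifs <;> first | contradiction | (exfalso; omega) | norm_num

lemma V_mem {m : ℕ} (hm : n = 2 * m) (hmo : m % 2 = 1) (hn : 3 ≤ n)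
    (hA : A = fun i j =>
      if j = i + 1 then (if i = (-1 : ZMod n) then -1 else 1)
      else if i = j + 1 then (if j = (-1 : ZMod n) then -1 else 1)
      else 0) : V n ∈ LinearMap.ker (Matrix.mulVecLin A) := by
  rw [ker_iff hn hA]
  intro i
  have hk : i.val < n := ZMod.val_lt i
  rw [S_eq hn i, S_eq hn (i - 1), V_def, V_def, val_add_one hn i, val_sub_one hn i]
  simp only [hpow]
  split_ifs <;> first | contradiction | (exfalso; omega) | norm_num


lemma ker_rep {m : ℕ} (hm : n = 2 * m) (hn : 3 ≤ n)
    (hA : A = fun i j =>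
      if j = i + 1 then (if i = (-1 : ZMod n) then -1 else 1)
      else if i = j + 1 then (if j = (-1 : ZMod n) then -1 else 1)
      else 0) {x : ZMod n → ℝ} (hx : x ∈ LinearMap.ker (Matrix.mulVecLin A)) :
    x = x 0 • U n + x 1 • V n := by
  funext i
  have hk : i.val < n := ZMod.val_lt i
  have hcast : ((i.val : ℕ) : ZMod n) = i := ZMod.natCast_rightInverse i
  rcases Nat.even_or_odd i.val with he | ho
  · obtain ⟨j, hj⟩ : ∃ j, i.val = 2 * j := ⟨i.val / 2, by rw [Nat.even_iff] at he; omega⟩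
    have hp := propagate hn hA hx 0 j
    have he1 : (0 : ZMod n) + ((2 * j : ℕ) : ZMod n) = i := by rw [zero_add, ← hj, hcast]
    have hprod : ∏ t ∈ Finset.range (2 * j), S n ((0 : ZMod n) + (t : ZMod n)) = 1 := by
      apply Finset.prod_eq_one
      intro t ht
      have ht' := Finset.mem_range.mp ht
      rw [zero_add]
      exact S_cast_eq_one hn (by omega)
    rw [he1, hprod, mul_one] at hp
    have hU : U n i = (-1 : ℝ) ^ j := by
      rw [U_def, if_pos (by omega : i.val % 2 = 0), (by omega : i.val / 2 = j)]
    have hV : V n i = 0 := by rw [V_def, if_neg (by omega)]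
    simp only [Pi.add_apply, Pi.smul_apply, smul_eq_mul, hU, hV, hp]
    ring
  · obtain ⟨j, hj⟩ : ∃ j, i.val = 2 * j + 1 := ⟨i.val / 2, by rw [Nat.odd_iff] at ho; omega⟩
    have hp := propagate hn hA hx 1 j
    have he1 : (1 : ZMod n) + ((2 * j : ℕ) : ZMod n) = i := by
      rw [← hcast, hj]; push_cast; ring
    have hprod : ∏ t ∈ Finset.range (2 * j), S n ((1 : ZMod n) + (t : ZMod n)) = 1 := by
      apply Finset.prod_eq_one
      intro t ht
      have ht' := Finset.mem_range.mp ht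
      have e2 : (1 : ZMod n) + (t : ZMod n) = (((t + 1 : ℕ)) : ZMod n) := by push_cast; ring
      rw [e2]
      exact S_cast_eq_one hn (by omega)
    rw [he1, hprod, mul_one] at hp
    have hU : U n i = 0 := by rw [U_def, if_neg (by omega)]
    have hV : V n i = (-1 : ℝ) ^ j := by
      rw [V_def, if_pos (by omega : i.val % 2 = 1), (by omega : i.val / 2 = j)]
    simp only [Pi.add_apply, Pi.smul_apply, smul_eq_mul, hU, hV, hp]
    ring

lemma UV_indep (hn : 3 ≤ n) : LinearIndependent ℝ ![U n, V n] := by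
  rw [LinearIndependent.pair_iff]
  intro s t hst
  have hv1 : (1 : ZMod n).val = 1 := by
    rw [← Nat.cast_one, ZMod.val_cast_of_lt (by omega)]
  have h0 := congrFun hst 0
  have h1 := congrFun hst 1
  simp only [Pi.add_apply, Pi.smul_apply, smul_eq_mul, Pi.zero_apply] at h0 h1
  rw [U_def, V_def] at h0 h1
  rw [ZMod.val_zero] at h0
  rw [hv1] at h1
  norm_num at h0 h1
  exact ⟨h0, h1⟩

lemma ker_eq_span {m : ℕ} (hm : n = 2 * m) (hmo : m % 2 = 1) (hn : 3 ≤ n)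
    (hA : A = fun i j =>
      if j = i + 1 then (if i = (-1 : ZMod n) then -1 else 1)
      else if i = j + 1 then (if j = (-1 : ZMod n) then -1 else 1)
      else 0) :
    LinearMap.ker (Matrix.mulVecLin A) = Submodule.span ℝ (Set.range ![U n, V n]) := by
  apply le_antisymm
  · intro x hx
    rw [ker_rep hm hn hA hx]
    apply Submodule.add_mem
    · exact Submodule.smul_mem _ _ (Submodule.subset_span ⟨0, rfl⟩)
    · exact Submodule.smul_mem _ _ (Submodule.subset_span ⟨1, rfl⟩)
  · rw [Submodule.span_le]
    rintro y ⟨w, rfl⟩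
    fin_cases w
    · exact U_mem hm hmo hn hA
    · exact V_mem hm hmo hn hA

lemma ker_bot (hn : 3 ≤ n) (h4 : n % 4 ≠ 2)
    (hA : A = fun i j =>
      if j = i + 1 then (if i = (-1 : ZMod n) then -1 else 1)
      else if i = j + 1 then (if j = (-1 : ZMod n) then -1 else 1)
      else 0) :
    LinearMap.ker (Matrix.mulVecLin A) = ⊥ := by
  rw [eq_bot_iff]
  intro x hx
  rw [Submodule.mem_bot]
  funext i
  show x i = 0
  rcases Nat.even_or_odd n with he | ho
  · obtain ⟨m, hm'⟩ := he
    have hm : n = 2 * m := by omega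
    have hme : Even m := by rw [Nat.even_iff]; omega
    have hp := propagate hn hA hx i m
    have hc : ((2 * m : ℕ) : ZMod n) = 0 := by rw [← hm]; exact ZMod.natCast_self n
    rw [hc, add_zero] at hp
    have hprod : ∏ t ∈ Finset.range (2 * m), S n (i + (t : ZMod n)) = -1 := by
      rw [← hm]; exact prod_full hn i
    rw [hprod, Even.neg_one_pow hme] at hp
    linarith
  · have hp := propagate hn hA hx i n
    have hc : ((2 * n : ℕ) : ZMod n) = 0 := by push_cast [ZMod.natCast_self]; ring
    rw [hc, add_zero] at hp
    have hsplit : ∏ t ∈ Finset.range (2 * n), S n (i + (t : ZMod n)) = 1 := by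
      rw [two_mul, Finset.prod_range_add]
      have hcg : ∀ t ∈ Finset.range n, S n (i + ((n + t : ℕ) : ZMod n)) = S n (i + (t : ZMod n)) := by
        intro t _
        have : ((n + t : ℕ) : ZMod n) = ((t : ℕ) : ZMod n) := by
          push_cast [ZMod.natCast_self]; ring
        rw [this]
      rw [Finset.prod_congr rfl hcg, prod_full hn i]
      norm_num
    rw [hsplit, Odd.neg_one_pow ho] at hp
    linarith

end Part2

/-- the nullity of the unbalanced signed cycle Cₙ is 2 if n ≡ 2 (mod 4)
and 0 otherwise. -/
theorem stmt9 (n : ℕ) [NeZero n] (hn : 3 ≤ n)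
    (A : Matrix (ZMod n) (ZMod n) ℝ)
    (hA : A = fun i j =>
      if j = i + 1 then (if i = (-1 : ZMod n) then -1 else 1)
      else if i = j + 1 then (if j = (-1 : ZMod n) then -1 else 1)
      else 0) :
    nullity A = if n % 4 = 2 then 2 else 0 := by
  unfold nullity
  by_cases h4 : n % 4 = 2
  · rw [if_pos h4]
    obtain ⟨m, hm⟩ : ∃ m, n = 2 * m := ⟨n / 2, by omega⟩
    have hmo : m % 2 = 1 := by omega
    rw [Part2.ker_eq_span hm hmo hn hA, finrank_span_eq_card (Part2.UV_indep hn)]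
    simp
  · rw [if_neg h4, Part2.ker_bot hn h4 hA, finrank_bot]
end

section
/- Every quasi-pendant vertex of a tree (a vertex adjacent to a vertex of degree one) is covered by every maximum matching of the tree. -/
open scoped Classical

/-- every quasi-pendant vertex of a tree is covered by every maximum
matching. -/
theorem stmt12 {V : Type*} [Fintype V] [DecidableEq V]
    (G : SimpleGraph V) (hT : G.IsTree)
    (p q : V) (hadj : G.Adj p q) (hpend : G.neighborSet p = {q}) :
    MatchedIn G q := by
  intro M hM hcard
  by_contra h
  push_neg at h
  -- h : ∀ e ∈ M, q ∉ e
  have hp : ∀ e ∈ M, p ∉ e := by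
    intro e he hpe
    obtain ⟨x, rfl⟩ := Sym2.mem_iff_exists.mp hpe
    have hE : G.Adj p x := (SimpleGraph.mem_edgeSet G).mp (hM.1 _ he)
    have hx : x = q := by
      have : x ∈ G.neighborSet p := hE
      rw [hpend] at this
      exact this
    exact h _ he (by rw [hx]; exact Sym2.mem_mk_right p q)
  have hnotmem : s(p, q) ∉ M := fun hmem => h _ hmem (Sym2.mem_mk_right p q)
  set M' : Finset (Sym2 V) := insert s(p, q) M with hM'def
  have hM' : IsMatchingF G M' := by
    constructor
    · intro e he
      rcases Finset.mem_insert.mp he with rfl | he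
      · exact hadj
      · exact hM.1 _ he
    · intro e he f hf hef v ⟨hve, hvf⟩
      rcases Finset.mem_insert.mp he with rfl | he' <;>
        rcases Finset.mem_insert.mp hf with rfl | hf'
      · exact hef rfl
      · rcases Sym2.mem_iff.mp hve with rfl | rfl
        · exact hp _ hf' hvf
        · exact h _ hf' hvf
      · rcases Sym2.mem_iff.mp hvf with rfl | rfl
        · exact hp _ he' hve
        · exact h _ he' hve
      · exact hM.2 _ he' _ hf' hef v ⟨hve, hvf⟩
  have hcard' : M'.card = M.card + 1 := Finset.card_insert_of_notMem hnotmem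
  have hbdd : BddAbove {k | ∃ N : Finset (Sym2 V), IsMatchingF G N ∧ N.card = k} := by
    refine ⟨Fintype.card (Sym2 V), ?_⟩
    rintro k ⟨N, -, rfl⟩
    exact Finset.card_le_univ N
  have hle : M.card + 1 ≤ matchingNumber G := by
    apply le_csSup hbdd
    exact ⟨M', hM', by rw [hcard']⟩
  omega
end

section
/- If v is a mismatched vertex of a tree T, then every neighbor u of v is matched in T, and moreover u is matched in the component of T − v containing u. -/
open scoped Classical

set_option linter.unusedSectionVars false
set_option linter.unusedVariables false

namespace Stmt13Aux

variable {V : Type*} [Fintype V] [DecidableEq V]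

lemma isMatchingF_empty (G : SimpleGraph V) : IsMatchingF G ∅ := by
  constructor <;> simp

lemma matchSet_bdd (G : SimpleGraph V) :
    BddAbove {k | ∃ M : Finset (Sym2 V), IsMatchingF G M ∧ M.card = k} := by
  refine ⟨Fintype.card (Sym2 V), ?_⟩
  rintro k ⟨M, -, rfl⟩
  exact le_trans (Finset.card_le_univ M) (le_of_eq (Finset.card_univ))

lemma exists_max (G : SimpleGraph V) :
    ∃ M : Finset (Sym2 V), IsMatchingF G M ∧ M.card = matchingNumber G := by
  have hne : Set.Nonempty {k | ∃ M : Finset (Sym2 V), IsMatchingF G M ∧ M.card = k} :=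
    ⟨0, ∅, isMatchingF_empty G, rfl⟩
  exact Nat.sSup_mem hne (matchSet_bdd G)

lemma card_le_nu (G : SimpleGraph V) {M : Finset (Sym2 V)} (hM : IsMatchingF G M) :
    M.card ≤ matchingNumber G :=
  le_csSup (matchSet_bdd G) ⟨M, hM, rfl⟩

lemma edge_rep {G : SimpleGraph V} {e : Sym2 V} (he : e ∈ G.edgeSet) :
    ∃ a b, G.Adj a b ∧ e = s(a, b) := by
  induction e using Sym2.ind with
  | _ x y => exact ⟨x, y, he, rfl⟩

lemma matching_subset {G : SimpleGraph V} {A N : Finset (Sym2 V)} (h : A ⊆ N)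
    (hN : IsMatchingF G N) : IsMatchingF G A :=
  ⟨fun e he => hN.1 e (h he), fun e he f hf => hN.2 e (h he) f (h hf)⟩

lemma insert_matching (G : SimpleGraph V) {M : Finset (Sym2 V)} (hM : IsMatchingF G M)
    {a b : V} (hab : G.Adj a b) (ha : ∀ e ∈ M, a ∉ e) (hb : ∀ e ∈ M, b ∉ e) :
    IsMatchingF G (insert s(a, b) M) ∧ (insert s(a, b) M).card = M.card + 1 := by
  have hnot : s(a, b) ∉ M := fun h => ha _ h (Sym2.mem_mk_left a b)
  refine ⟨⟨?_, ?_⟩, Finset.card_insert_of_notMem hnot⟩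
  · intro e he
    rcases Finset.mem_insert.mp he with rfl | he
    · exact G.mem_edgeSet.mpr hab
    · exact hM.1 e he
  · intro e he f hf hef x hx
    rcases Finset.mem_insert.mp he with rfl | he'
    · rcases Finset.mem_insert.mp hf with rfl | hf'
      · exact hef rfl
      · rcases Sym2.mem_iff.mp hx.1 with rfl | rfl
        · exact ha _ hf' hx.2
        · exact hb _ hf' hx.2
    · rcases Finset.mem_insert.mp hf with rfl | hf'
      · rcases Sym2.mem_iff.mp hx.2 with rfl | rfl
        · exact ha _ he' hx.1
        · exact hb _ he' hx.1
      · exact hM.2 e he' f hf' hef x hx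

lemma union_matching (G : SimpleGraph V) {A B : Finset (Sym2 V)} {s : Set V}
    (hA : IsMatchingF G A) (hB : IsMatchingF G B)
    (hAs : ∀ e ∈ A, ∀ x ∈ e, x ∈ s) (hBs : ∀ e ∈ B, ∀ x ∈ e, x ∉ s) :
    IsMatchingF G (A ∪ B) ∧ (A ∪ B).card = A.card + B.card := by
  have hd : Disjoint A B := by
    rw [Finset.disjoint_left]
    intro e heA heB
    induction e using Sym2.ind with
    | _ x y => exact hBs _ heB x (Sym2.mem_mk_left x y) (hAs _ heA x (Sym2.mem_mk_left x y))
  refine ⟨⟨?_, ?_⟩, Finset.card_union_of_disjoint hd⟩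
  · intro e he
    rcases Finset.mem_union.mp he with he | he
    · exact hA.1 e he
    · exact hB.1 e he
  · intro e he f hf hef x hx
    rcases Finset.mem_union.mp he with he | he <;>
      rcases Finset.mem_union.mp hf with hf | hf
    · exact hA.2 e he f hf hef x hx
    · exact hBs f hf x hx.2 (hAs e he x hx.1)
    · exact hBs e he x hx.1 (hAs f hf x hx.2)
    · exact hB.2 e he f hf hef x hx

lemma split_matching (G : SimpleGraph V) (v : V) (s : Set V) (hv : v ∉ s)
    (hclosed : ∀ a b, a ∈ s → G.Adj a b → b ≠ v → b ∈ s)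
    {N : Finset (Sym2 V)} (hN : IsMatchingF G N) (hNv : ∀ e ∈ N, v ∉ e) :
    ∃ A B : Finset (Sym2 V), A ⊆ N ∧ B ⊆ N ∧
      IsMatchingF G A ∧ IsMatchingF G B ∧
      (∀ e ∈ A, ∀ x ∈ e, x ∈ s) ∧ (∀ e ∈ B, ∀ x ∈ e, x ∉ s) ∧
      A.card + B.card = N.card := by
  refine ⟨N.filter (fun e => ∀ x ∈ e, x ∈ s), N.filter (fun e => ¬ ∀ x ∈ e, x ∈ s),
    Finset.filter_subset _ _, Finset.filter_subset _ _,
    matching_subset (Finset.filter_subset _ _) hN,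
    matching_subset (Finset.filter_subset _ _) hN,
    fun e he => (Finset.mem_filter.mp he).2, ?_, ?_⟩
  · intro e he x hx hxs
    obtain ⟨heN, hne⟩ := Finset.mem_filter.mp he
    refine hne ?_
    obtain ⟨a, b, hab, rfl⟩ := edge_rep (hN.1 e heN)
    have hb : b ≠ v := fun h => hNv _ heN (h ▸ Sym2.mem_mk_right a b)
    have ha : a ≠ v := fun h => hNv _ heN (h ▸ Sym2.mem_mk_left a b)
    intro y hy
    rcases Sym2.mem_iff.mp hx with rfl | rfl <;> rcases Sym2.mem_iff.mp hy with rfl | rfl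
    · exact hxs
    · exact hclosed _ _ hxs hab hb
    · exact hclosed _ _ hxs hab.symm ha
    · exact hxs
  · rw [Finset.card_filter_add_card_filter_not]

end Stmt13Aux

section PushPull

variable {V : Type*} [Fintype V] [DecidableEq V]
variable {W : Type*} [Fintype W] [DecidableEq W]
variable {G : SimpleGraph V} {H : SimpleGraph W} {f : W → V} {g : V → W}

lemma push_matching (hf : Function.Injective f)
    (hH : ∀ a b, H.Adj a b ↔ G.Adj (f a) (f b))
    {M : Finset (Sym2 W)} (hM : IsMatchingF H M) :
    IsMatchingF G (M.image (Sym2.map f)) ∧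
    (M.image (Sym2.map f)).card = M.card ∧
    (∀ e ∈ M.image (Sym2.map f), ∀ x ∈ e, x ∈ Set.range f) ∧
    (∀ w : W, (∃ e ∈ M.image (Sym2.map f), f w ∈ e) ↔ ∃ e ∈ M, w ∈ e) := by
  have hinj : Function.Injective (Sym2.map f) := Sym2.map.injective hf
  have hmem : ∀ {e : Sym2 W} {w : W}, f w ∈ e.map f ↔ w ∈ e := by
    intro e w
    constructor
    · intro h
      obtain ⟨y, hy, hy2⟩ := Sym2.mem_map.mp h
      exact hf hy2 ▸ hy
    · intro h
      exact Sym2.mem_map.mpr ⟨w, h, rfl⟩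
  refine ⟨⟨?_, ?_⟩, Finset.card_image_of_injective _ hinj, ?_, ?_⟩
  · intro e he
    obtain ⟨e', he', rfl⟩ := Finset.mem_image.mp he
    obtain ⟨a, b, hab, rfl⟩ := Stmt13Aux.edge_rep (hM.1 e' he')
    rw [Sym2.map_pair_eq]
    exact G.mem_edgeSet.mpr ((hH a b).mp hab)
  · intro e he f' hf' hef x hx
    obtain ⟨e1, he1, rfl⟩ := Finset.mem_image.mp he
    obtain ⟨f1, hf1, rfl⟩ := Finset.mem_image.mp hf'
    obtain ⟨y, hy, rfl⟩ := Sym2.mem_map.mp hx.1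
    obtain ⟨z, hz, hyz⟩ := Sym2.mem_map.mp hx.2
    have : z = y := hf hyz
    subst this
    exact hM.2 e1 he1 f1 hf1 (fun h => hef (h ▸ rfl)) _ ⟨hy, hz⟩
  · intro e he x hx
    obtain ⟨e1, he1, rfl⟩ := Finset.mem_image.mp he
    obtain ⟨y, hy, rfl⟩ := Sym2.mem_map.mp hx
    exact ⟨y, rfl⟩
  · intro w
    constructor
    · rintro ⟨e, he, hwe⟩
      obtain ⟨e1, he1, rfl⟩ := Finset.mem_image.mp he
      exact ⟨e1, he1, hmem.mp hwe⟩
    · rintro ⟨e, he, hwe⟩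
      exact ⟨e.map f, Finset.mem_image_of_mem _ he, hmem.mpr hwe⟩

lemma pull_matching (hf : Function.Injective f)
    (hH : ∀ a b, H.Adj a b ↔ G.Adj (f a) (f b))
    (hg : ∀ x ∈ Set.range f, f (g x) = x)
    {N : Finset (Sym2 V)} (hN : IsMatchingF G N)
    (hNs : ∀ e ∈ N, ∀ x ∈ e, x ∈ Set.range f) :
    IsMatchingF H (N.image (Sym2.map g)) ∧
    (N.image (Sym2.map g)).card = N.card ∧
    (∀ w : W, (∃ e ∈ N.image (Sym2.map g), w ∈ e) ↔ ∃ e ∈ N, f w ∈ e) := by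
  have hgf : ∀ w : W, g (f w) = w := fun w => hf (hg (f w) ⟨w, rfl⟩)
  have hfg : ∀ e ∈ N, Sym2.map f (Sym2.map g e) = e := by
    intro e he
    induction e using Sym2.ind with
    | _ a b =>
      rw [Sym2.map_pair_eq, Sym2.map_pair_eq,
        hg a (hNs _ he a (Sym2.mem_mk_left a b)), hg b (hNs _ he b (Sym2.mem_mk_right a b))]
  have hmem2 : ∀ {e : Sym2 V} {w : W}, e ∈ N → (w ∈ e.map g ↔ f w ∈ e) := by
    intro e w he
    constructor
    · intro h
      obtain ⟨y, hy, rfl⟩ := Sym2.mem_map.mp h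
      rw [hg y (hNs _ he y hy)]
      exact hy
    · intro h
      have : w ∈ Sym2.map g e := Sym2.mem_map.mpr ⟨f w, h, hgf w⟩
      exact this
  refine ⟨⟨?_, ?_⟩, ?_, ?_⟩
  · intro e he
    obtain ⟨e1, he1, rfl⟩ := Finset.mem_image.mp he
    obtain ⟨a, b, hab, rfl⟩ := Stmt13Aux.edge_rep (hN.1 e1 he1)
    rw [Sym2.map_pair_eq]
    refine H.mem_edgeSet.mpr ((hH _ _).mpr ?_)
    rw [hg a (hNs _ he1 a (Sym2.mem_mk_left a b)), hg b (hNs _ he1 b (Sym2.mem_mk_right a b))]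
    exact hab
  · intro e he f' hf' hef w hw
    obtain ⟨e1, he1, rfl⟩ := Finset.mem_image.mp he
    obtain ⟨f1, hf1, rfl⟩ := Finset.mem_image.mp hf'
    have h1 : f w ∈ e1 := (hmem2 he1).mp hw.1
    have h2 : f w ∈ f1 := (hmem2 hf1).mp hw.2
    have hne : e1 ≠ f1 := by
      intro h; exact hef (h ▸ rfl)
    exact hN.2 e1 he1 f1 hf1 hne (f w) ⟨h1, h2⟩
  · apply le_antisymm (Finset.card_image_le)
    have : N = (N.image (Sym2.map g)).image (Sym2.map f) := by
      rw [Finset.image_image]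
      conv_lhs => rw [← Finset.image_id (s := N)]
      exact Finset.image_congr (fun e he => (hfg e he).symm)
    calc N.card = ((N.image (Sym2.map g)).image (Sym2.map f)).card := by rw [← this]
      _ ≤ (N.image (Sym2.map g)).card := Finset.card_image_le
  · intro w
    constructor
    · rintro ⟨e, he, hwe⟩
      obtain ⟨e1, he1, rfl⟩ := Finset.mem_image.mp he
      exact ⟨e1, he1, (hmem2 he1).mp hwe⟩
    · rintro ⟨e, he, hwe⟩
      exact ⟨e.map g, Finset.mem_image_of_mem _ he, (hmem2 he).mpr hwe⟩

end PushPull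

section Main

variable {V : Type*} [Fintype V] [DecidableEq V]

def Vc (G : SimpleGraph V) (v u : V) (hne : u ≠ v) : Set ({x : V | x ≠ v}) :=
  ((G.induce {x : V | x ≠ v}).connectedComponentMk ⟨u, hne⟩).supp

def fmap (G : SimpleGraph V) (v u : V) (hne : u ≠ v) : ↥(Vc G v u hne) → V :=
  fun y => ((y : {x : V | x ≠ v}) : V)

noncomputable def gmap (G : SimpleGraph V) (v u : V) (hne : u ≠ v) : V → ↥(Vc G v u hne) :=
  fun x =>
    if h1 : x = v then ⟨⟨u, hne⟩, rfl⟩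
    else if h2 : (⟨x, h1⟩ : {x : V | x ≠ v}) ∈ Vc G v u hne then ⟨⟨x, h1⟩, h2⟩
    else ⟨⟨u, hne⟩, rfl⟩

lemma fmap_inj (G : SimpleGraph V) (v u : V) (hne : u ≠ v) :
    Function.Injective (fmap G v u hne) :=
  fun _ _ h => Subtype.ext (Subtype.ext h)

lemma adj_iff (G : SimpleGraph V) (v u : V) (hne : u ≠ v) :
    ∀ a b, ((G.induce {x : V | x ≠ v}).induce (Vc G v u hne)).Adj a b ↔
      G.Adj (fmap G v u hne a) (fmap G v u hne b) :=
  fun _ _ => Iff.rfl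

lemma u_mem_range (G : SimpleGraph V) (v u : V) (hne : u ≠ v) :
    u ∈ Set.range (fmap G v u hne) :=
  ⟨⟨⟨u, hne⟩, rfl⟩, rfl⟩

lemma v_notMem_range (G : SimpleGraph V) (v u : V) (hne : u ≠ v) :
    v ∉ Set.range (fmap G v u hne) := by
  rintro ⟨y, h⟩
  exact y.1.2 h

lemma range_closed (G : SimpleGraph V) (v u : V) (hne : u ≠ v) :
    ∀ a b, a ∈ Set.range (fmap G v u hne) → G.Adj a b → b ≠ v →
      b ∈ Set.range (fmap G v u hne) := by
  rintro a b ⟨y, rfl⟩ hab hbv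
  refine ⟨⟨⟨b, hbv⟩, ?_⟩, rfl⟩
  have h1 : (G.induce {x : V | x ≠ v}).Adj y.1 ⟨b, hbv⟩ := hab
  have h2 := y.2
  simp only [Vc, SimpleGraph.ConnectedComponent.mem_supp_iff] at h2 ⊢
  rw [← h2]
  exact SimpleGraph.ConnectedComponent.sound h1.symm.reachable

lemma fg_spec (G : SimpleGraph V) (v u : V) (hne : u ≠ v) :
    ∀ x ∈ Set.range (fmap G v u hne), fmap G v u hne (gmap G v u hne x) = x := by
  rintro x ⟨y, rfl⟩
  have h1 : ¬ (fmap G v u hne y = v) := y.1.2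
  have h2 : (⟨fmap G v u hne y, h1⟩ : {x : V | x ≠ v}) ∈ Vc G v u hne := by
    have : (⟨fmap G v u hne y, h1⟩ : {x : V | x ≠ v}) = y.1 := Subtype.ext rfl
    rw [this]
    exact y.2
  rw [gmap, dif_neg h1, dif_pos h2]
  rfl

lemma tree_geom (G : SimpleGraph V) (hT : G.IsTree) (v u : V) (hne : u ≠ v)
    (hadj : G.Adj u v) (w : V) (hw : w ∈ Set.range (fmap G v u hne))
    (hvw : G.Adj v w) (hwu : w ≠ u) : False := by
  obtain ⟨y, rfl⟩ := hw
  set w := fmap G v u hne y with hwdef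
  have hwv : w ≠ v := y.1.2
  have hy2 := y.2
  simp only [Vc, SimpleGraph.ConnectedComponent.mem_supp_iff] at hy2
  have hreach : (G.induce {x : V | x ≠ v}).Reachable y.1 ⟨u, hne⟩ :=
    SimpleGraph.ConnectedComponent.eq.mp hy2
  obtain p' := hreach.some
  let ι : (G.induce {x : V | x ≠ v}) →g G := ⟨Subtype.val, fun {a b} h => h⟩
  let p : G.Walk w u := p'.map ι
  have hvp : v ∉ p.support := by
    show v ∉ (p'.map ι).support
    rw [SimpleGraph.Walk.support_map]
    intro hmem
    obtain ⟨z, _, hz2⟩ := List.mem_map.mp hmem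
    exact z.2 hz2
  have hvq : v ∉ p.toPath.1.support := fun h => hvp (SimpleGraph.Walk.support_toPath_subset p h)
  let path2 : G.Walk v u := SimpleGraph.Walk.cons hvw p.toPath.1
  have hpath2 : path2.IsPath := p.toPath.2.cons hvq
  let path1 : G.Walk v u := SimpleGraph.Walk.cons hadj.symm SimpleGraph.Walk.nil
  have hpath1 : path1.IsPath := by
    refine SimpleGraph.Walk.IsPath.cons SimpleGraph.Walk.IsPath.nil ?_
    simp only [SimpleGraph.Walk.support_nil, List.mem_singleton]
    exact fun h => hne h.symm
  obtain ⟨p0, -, hup⟩ := hT.existsUnique_path v u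
  have h12 : path1 = path2 := (hup path1 hpath1).trans (hup path2 hpath2).symm
  have hwmem : w ∈ path2.support := by
    rw [SimpleGraph.Walk.support_cons]
    exact List.mem_cons_of_mem _ (SimpleGraph.Walk.start_mem_support _)
  rw [← h12] at hwmem
  have : w = v ∨ w = u := by
    simpa [path1] using hwmem
  rcases this with h | h
  · exact hwv h
  · exact hwu h

end Main

section Final

variable {V : Type*} [Fintype V] [DecidableEq V]

lemma main2 (G : SimpleGraph V) (v u : V) (hne : u ≠ v) (hadj : G.Adj u v)
    (hmis : MismatchedIn G v) :
    MatchedIn ((G.induce {x : V | x ≠ v}).induce (Vc G v u hne)) ⟨⟨u, hne⟩, rfl⟩ := by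
  intro Mh hMh hcard
  by_contra hno
  push_neg at hno
  obtain ⟨M₀, hM₀, hc₀, hM₀v⟩ := hmis
  obtain ⟨A, B, hAsub, hBsub, hAm, hBm, hAin, hBout, hABcard⟩ :=
    Stmt13Aux.split_matching G v (Set.range (fmap G v u hne)) (v_notMem_range G v u hne)
      (range_closed G v u hne) hM₀ hM₀v
  obtain ⟨hpAm, hpAcard, -⟩ :=
    pull_matching (fmap_inj G v u hne) (adj_iff G v u hne) (fg_spec G v u hne) hAm hAin
  have hAle : A.card ≤ matchingNumber ((G.induce {x : V | x ≠ v}).induce (Vc G v u hne)) := by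
    rw [← hpAcard]
    exact Stmt13Aux.card_le_nu _ hpAm
  obtain ⟨hPm, hPcard, hPsupp, hPcov⟩ :=
    push_matching (fmap_inj G v u hne) (adj_iff G v u hne) hMh
  have hPu : ∀ e ∈ Mh.image (Sym2.map (fmap G v u hne)), u ∉ e := by
    intro e he hue
    obtain ⟨e', he', hu'⟩ := (hPcov ⟨⟨u, hne⟩, rfl⟩).mp ⟨e, he, hue⟩
    exact hno e' he' hu'
  obtain ⟨hNm, hNcard⟩ := Stmt13Aux.union_matching G hPm hBm hPsupp hBout
  have hNu : ∀ e ∈ Mh.image (Sym2.map (fmap G v u hne)) ∪ B, u ∉ e := by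
    intro e he
    rcases Finset.mem_union.mp he with he | he
    · exact hPu e he
    · exact fun hu' => hBout e he u hu' (u_mem_range G v u hne)
  have hNv : ∀ e ∈ Mh.image (Sym2.map (fmap G v u hne)) ∪ B, v ∉ e := by
    intro e he
    rcases Finset.mem_union.mp he with he | he
    · exact fun hv' => v_notMem_range G v u hne (hPsupp e he v hv')
    · exact hM₀v e (hBsub he)
  obtain ⟨hIm, hIcard⟩ := Stmt13Aux.insert_matching G hNm hadj hNu hNv
  have hIle := Stmt13Aux.card_le_nu G hIm
  omega

lemma main1 (G : SimpleGraph V) (hT : G.IsTree) (v u : V) (hne : u ≠ v) (hadj : G.Adj u v)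
    (hmis : MismatchedIn G v) : MatchedIn G u := by
  have h2 := main2 G v u hne hadj hmis
  intro M hM hcard
  by_contra hno
  push_neg at hno
  obtain ⟨M₀, hM₀, hc₀, hM₀v⟩ := hmis
  by_cases hv : ∀ e ∈ M, v ∉ e
  · obtain ⟨hIm, hIcard⟩ := Stmt13Aux.insert_matching G hM hadj hno hv
    have := Stmt13Aux.card_le_nu G hIm
    omega
  push_neg at hv
  obtain ⟨e₀, he₀, hve₀⟩ := hv
  obtain ⟨a, b, hab, rfl⟩ := Stmt13Aux.edge_rep (hM.1 e₀ he₀)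
  have hw : ∃ w, G.Adj v w ∧ s(v, w) ∈ M := by
    rcases Sym2.mem_iff.mp hve₀ with h | h
    · subst h
      exact ⟨b, hab, he₀⟩
    · subst h
      refine ⟨a, hab.symm, ?_⟩
      rwa [Sym2.eq_swap] at he₀
  obtain ⟨w, hvw, hwM⟩ := hw
  clear hve₀ he₀ hab
  have hwu : w ≠ u := fun h => hno _ hwM (h ▸ Sym2.mem_mk_right v w)
  have hww : w ∉ Set.range (fmap G v u hne) :=
    fun hmem => tree_geom G hT v u hne hadj w hmem hvw hwu
  -- M' = M minus the edge at v
  have hM'sub : M.erase s(v, w) ⊆ M := Finset.erase_subset _ _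
  have hM'm : IsMatchingF G (M.erase s(v, w)) := Stmt13Aux.matching_subset hM'sub hM
  have hM'v : ∀ e ∈ M.erase s(v, w), v ∉ e := by
    intro e he hv'
    exact hM.2 e (hM'sub he) s(v, w) hwM (Finset.ne_of_mem_erase he) v
      ⟨hv', Sym2.mem_mk_left v w⟩
  have hM'w : ∀ e ∈ M.erase s(v, w), w ∉ e := by
    intro e he hw'
    exact hM.2 e (hM'sub he) s(v, w) hwM (Finset.ne_of_mem_erase he) w
      ⟨hw', Sym2.mem_mk_right v w⟩
  have hM'c : (M.erase s(v, w)).card + 1 = M.card := Finset.card_erase_add_one hwM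
  obtain ⟨A', B', hA'sub, hB'sub, hA'm, hB'm, hA'in, hB'out, hA'B'card⟩ :=
    Stmt13Aux.split_matching G v (Set.range (fmap G v u hne)) (v_notMem_range G v u hne)
      (range_closed G v u hne) hM'm hM'v
  obtain ⟨A, B, hAsub, hBsub, hAm, hBm, hAin, hBout, hABcard⟩ :=
    Stmt13Aux.split_matching G v (Set.range (fmap G v u hne)) (v_notMem_range G v u hne)
      (range_closed G v u hne) hM₀ hM₀v
  -- pull A' : it misses u'', so it cannot be maximum
  obtain ⟨hpA'm, hpA'card, hpA'cov⟩ :=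
    pull_matching (fmap_inj G v u hne) (adj_iff G v u hne) (fg_spec G v u hne) hA'm hA'in
  have hA'le : A'.card ≤ matchingNumber ((G.induce {x : V | x ≠ v}).induce (Vc G v u hne)) := by
    rw [← hpA'card]
    exact Stmt13Aux.card_le_nu _ hpA'm
  have hA'ne : A'.card ≠ matchingNumber ((G.induce {x : V | x ≠ v}).induce (Vc G v u hne)) := by
    intro hA'eq
    obtain ⟨e', he', hu'⟩ := h2 (A'.image (Sym2.map (gmap G v u hne))) hpA'm (by omega)
    obtain ⟨e, he, hue⟩ := (hpA'cov ⟨⟨u, hne⟩, rfl⟩).mp ⟨e', he', hu'⟩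
    exact hno e (hM'sub (hA'sub he)) hue
  -- matchingNumber H ≤ A.card
  obtain ⟨Mx, hMxm, hMxcard⟩ :=
    Stmt13Aux.exists_max ((G.induce {x : V | x ≠ v}).induce (Vc G v u hne))
  obtain ⟨hPm, hPcard, hPsupp, -⟩ :=
    push_matching (fmap_inj G v u hne) (adj_iff G v u hne) hMxm
  obtain ⟨hN1m, hN1card⟩ := Stmt13Aux.union_matching G hPm hBm hPsupp hBout
  have hN1le := Stmt13Aux.card_le_nu G hN1m
  -- Q = A ∪ B' plus the edge vw
  obtain ⟨hQm, hQcard⟩ := Stmt13Aux.union_matching G hAm hB'm hAin hB'out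
  have hQv : ∀ e ∈ A ∪ B', v ∉ e := by
    intro e he
    rcases Finset.mem_union.mp he with he | he
    · exact fun hv' => v_notMem_range G v u hne (hAin e he v hv')
    · exact hM'v e (hB'sub he)
  have hQw : ∀ e ∈ A ∪ B', w ∉ e := by
    intro e he
    rcases Finset.mem_union.mp he with he | he
    · exact fun hw' => hww (hAin e he w hw')
    · exact hM'w e (hB'sub he)
  obtain ⟨hIm, hIcard⟩ := Stmt13Aux.insert_matching G hQm hvw hQv hQw
  have hIle := Stmt13Aux.card_le_nu G hIm
  omega

end Final

/-- if v is mismatched in a tree T, then every neighbor u of v is matched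
in T, and u is matched in the component of T − v containing u. -/
theorem stmt13 {V : Type*} [Fintype V] [DecidableEq V]
    (G : SimpleGraph V) (hT : G.IsTree)
    (v u : V) (hmis : MismatchedIn G v) (hadj : G.Adj u v) :
    MatchedIn G u ∧
    MatchedIn
      ((G.induce {x | x ≠ v}).induce
        (((G.induce {x | x ≠ v}).connectedComponentMk ⟨u, hadj.ne⟩).supp))
      ⟨⟨u, hadj.ne⟩, rfl⟩ := by
  exact ⟨main1 G hT v u hadj.ne hadj hmis, main2 G v u hadj.ne hadj hmis⟩
end

section
/- Let T be a signed tree with a vertex u that is matched in T (covered by every maximum matching), and let Γ be a signed graph on n vertices disjoint from T. For any 1 ≤ k ≤ n, form the k-joining graph T(u) ⊙^k Γ by adding signed edges from u to k vertices of Γ. Then η(T(u) ⊙^k Γ) = η(T) + η(Γ). -/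
open scoped Classical

/-- The k-joining graph: disjoint union of T and Γ plus edges from u to the vertices of
the chosen set S ⊆ V(Γ). -/
def joinGraph {V₁ V₂ : Type*} (T : SimpleGraph V₁) (Γ : SimpleGraph V₂)
    (u : V₁) (S : Finset V₂) : SimpleGraph (V₁ ⊕ V₂) :=
  SimpleGraph.fromRel (fun p q =>
    match p, q with
    | Sum.inl a, Sum.inl b => T.Adj a b
    | Sum.inr a, Sum.inr b => Γ.Adj a b
    | Sum.inl a, Sum.inr b => a = u ∧ b ∈ S
    | Sum.inr _, Sum.inl _ => False)



open Matrix

section helpers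
universe u

set_option linter.unusedSectionVars false

lemma sum_ne_subtype {V : Type*} [Fintype V] [DecidableEq V] (u : V) (f : V → ℝ) :
    ∑ w : V, f w = f u + ∑ w : {v : V // v ≠ u}, f ↑w := by
  rw [← Finset.sum_subtype (Finset.univ.erase u) (fun x => by simp [Finset.mem_erase]) f]
  rw [Finset.add_sum_erase _ f (Finset.mem_univ u)]

lemma sum_ne2_subtype {V : Type*} [Fintype V] [DecidableEq V] {l p : V} (hlp : l ≠ p) (f : V → ℝ) :
    ∑ w : V, f w = f l + f p + ∑ w : {v : V // v ≠ l ∧ v ≠ p}, f ↑w := by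
  rw [← Finset.sum_subtype ((Finset.univ.erase l).erase p)
    (fun x => by simp [Finset.mem_erase]; tauto) f]
  rw [add_assoc, Finset.add_sum_erase _ f (by simp [Finset.mem_erase, Ne.symm hlp]),
    Finset.add_sum_erase _ f (Finset.mem_univ l)]

lemma dot_single {V : Type*} [Fintype V] [DecidableEq V] (u : V) (v : V → ℝ) (d : ℝ) :
    v ⬝ᵥ Pi.single u d = v u * d := by
  simp [dotProduct, Pi.single_apply, mul_ite, Finset.sum_ite_eq']

/-- extension by zero as a linear map -/
noncomputable def extZero {V : Type*} [DecidableEq V] (u : V) :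
    ({v : V // v ≠ u} → ℝ) →ₗ[ℝ] (V → ℝ) where
  toFun y := fun v => if h : v = u then 0 else y ⟨v, h⟩
  map_add' y z := by funext v; by_cases h : v = u <;> simp [h]
  map_smul' c y := by funext v; by_cases h : v = u <;> simp [h]

lemma nullity_del_add_one_le {V : Type*} [Fintype V] [DecidableEq V]
    (A : Matrix V V ℝ) (hA : Aᵀ = A) (u : V) (x : V → ℝ)
    (hx : A.mulVec x = 0) (hxu : x u ≠ 0) :
    nullity (A.submatrix (Subtype.val : {v : V // v ≠ u} → V) Subtype.val) + 1 ≤ nullity A := by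
  classical
  set B := A.submatrix (Subtype.val : {v : V // v ≠ u} → V) Subtype.val with hB
  set E := extZero (V := V) u with hE
  have hEapp : ∀ (y : {v : V // v ≠ u} → ℝ) (v : V) (h : v ≠ u), E y v = y ⟨v, h⟩ := by
    intro y v h; simp [hE, extZero, h]
  have hEu : ∀ (y : {v : V // v ≠ u} → ℝ), E y u = 0 := by intro y; simp [hE, extZero]
  -- main: if B.mulVec y = 0 then A.mulVec (E y) = 0
  have main : ∀ y, B.mulVec y = 0 → A.mulVec (E y) = 0 := by
    intro y hy
    have h1 : ∀ v : V, v ≠ u → A.mulVec (E y) v = 0 := by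
      intro v hv
      have : A.mulVec (E y) v = B.mulVec y ⟨v, hv⟩ := by
        simp only [Matrix.mulVec, dotProduct]
        rw [sum_ne_subtype u (fun w => A v w * E y w), hEu, mul_zero, zero_add]
        apply Finset.sum_congr rfl
        intro w _
        rw [hEapp y w w.2]
        rfl
      rw [this, hy]; rfl
    have hsingle : A.mulVec (E y) = Pi.single u (A.mulVec (E y) u) := by
      funext v
      by_cases h : v = u
      · subst h; simp
      · rw [h1 v h, Pi.single_apply, if_neg h]
    have hdot : x ⬝ᵥ A.mulVec (E y) = 0 := by
      rw [Matrix.dotProduct_mulVec, ← Matrix.mulVec_transpose, hA, hx]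
      simp [dotProduct]
    rw [hsingle, dot_single] at hdot
    have : A.mulVec (E y) u = 0 := by
      rcases mul_eq_zero.mp hdot with h | h
      · exact absurd h hxu
      · exact h
    rw [hsingle, this]
    simp
  -- the injection
  let Φ : (LinearMap.ker B.mulVecLin × ℝ) →ₗ[ℝ] (V → ℝ) :=
    { toFun := fun q => E q.1.1 + q.2 • x
      map_add' := fun q r => by
        simp only [Submodule.coe_add, map_add, add_smul, Prod.fst_add, Prod.snd_add]
        abel
      map_smul' := fun c q => by
        simp only [Submodule.coe_smul, _root_.map_smul, RingHom.id_apply, Prod.smul_fst,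
          Prod.smul_snd, smul_smul, smul_add, smul_eq_mul] }
  have hΦapp : ∀ q, Φ q = E q.1.1 + q.2 • x := fun q => rfl
  have hΦ : ∀ q, Φ q ∈ LinearMap.ker A.mulVecLin := by
    intro q
    rw [LinearMap.mem_ker, Matrix.mulVecLin_apply]
    show A.mulVec (E q.1.1 + q.2 • x) = 0
    rw [Matrix.mulVec_add, Matrix.mulVec_smul, main q.1.1 (by
      have := q.1.2; rwa [LinearMap.mem_ker, Matrix.mulVecLin_apply] at this), hx]
    simp
  have hinj : Function.Injective (Φ.codRestrict _ hΦ) := by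
    intro q r hqr
    have h0 : Φ q = Φ r := congrArg Subtype.val hqr
    rw [hΦapp, hΦapp] at h0
    have hu' : E q.1.1 u + q.2 * x u = E r.1.1 u + r.2 * x u := congrFun h0 u
    rw [hEu, hEu, zero_add, zero_add] at hu'
    have hc : q.2 = r.2 := mul_right_cancel₀ hxu hu'
    have hy : q.1 = r.1 := by
      ext w
      have h3 := congrFun h0 ↑w
      simp only [Pi.add_apply, Pi.smul_apply, smul_eq_mul, hc] at h3
      have h2 : E q.1.1 ↑w = E r.1.1 ↑w := by linarith
      rwa [hEapp _ _ w.2, hEapp _ _ w.2] at h2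
    exact Prod.ext hy hc
  have := LinearMap.finrank_le_finrank_of_injective hinj
  rwa [Module.finrank_prod, Module.finrank_self] at this



noncomputable def extLeaf {V : Type*} [Fintype V] [DecidableEq V] (A : Matrix V V ℝ) (l p : V) :
    ({v : V // v ≠ l ∧ v ≠ p} → ℝ) →ₗ[ℝ] (V → ℝ) where
  toFun y := fun v =>
    if h1 : v = l then -(A p l)⁻¹ * (∑ w : {v : V // v ≠ l ∧ v ≠ p}, A p ↑w * y w)
    else if h2 : v = p then 0 else y ⟨v, ⟨h1, h2⟩⟩
  map_add' y z := by
    funext v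
    simp only [Pi.add_apply]
    by_cases h1 : v = l
    · rw [dif_pos h1, dif_pos h1, dif_pos h1]
      simp only [mul_add, Finset.sum_add_distrib]
    · rw [dif_neg h1, dif_neg h1, dif_neg h1]
      by_cases h2 : v = p
      · rw [dif_pos h2, dif_pos h2, dif_pos h2]; ring
      · rw [dif_neg h2, dif_neg h2, dif_neg h2]
  map_smul' c y := by
    funext v
    simp only [Pi.smul_apply, smul_eq_mul, RingHom.id_apply]
    by_cases h1 : v = l
    · rw [dif_pos h1, dif_pos h1]
      rw [show (∑ w : {v : V // v ≠ l ∧ v ≠ p}, A p ↑w * (c * y w))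
          = c * ∑ w : {v : V // v ≠ l ∧ v ≠ p}, A p ↑w * y w by
        rw [Finset.mul_sum]; exact Finset.sum_congr rfl (fun w _ => by ring)]
      ring
    · rw [dif_neg h1, dif_neg h1]
      by_cases h2 : v = p
      · rw [dif_pos h2, dif_pos h2]; ring
      · rw [dif_neg h2, dif_neg h2]

lemma nullity_leaf {V : Type*} [Fintype V] [DecidableEq V] (A : Matrix V V ℝ) (hA : Aᵀ = A)
    (l p : V) (hlp : l ≠ p) (hα : A l p ≠ 0) (hrow : ∀ w, w ≠ p → A l w = 0) :
    nullity A = nullity (A.submatrix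
      (Subtype.val : {v : V // v ≠ l ∧ v ≠ p} → V) Subtype.val) := by
  classical
  set B := A.submatrix (Subtype.val : {v : V // v ≠ l ∧ v ≠ p} → V) Subtype.val with hB
  have hsym : ∀ a b, A a b = A b a := by
    intro a b
    conv_rhs => rw [← hA]
    rw [Matrix.transpose_apply]
  have hApl : A p l ≠ 0 := by rw [hsym p l]; exact hα
  have hcol : ∀ w, w ≠ p → A w l = 0 := fun w hw => by rw [hsym w l]; exact hrow w hw
  set E := extLeaf A l p with hE
  have hEl : ∀ y, E y l = -(A p l)⁻¹ * (∑ w : {v : V // v ≠ l ∧ v ≠ p}, A p ↑w * y w) := by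
    intro y; simp [hE, extLeaf]
  have hEp : ∀ y, E y p = 0 := by intro y; simp [hE, extLeaf, Ne.symm hlp]
  have hEw : ∀ y (v : V) (h : v ≠ l ∧ v ≠ p), E y v = y ⟨v, h⟩ := by
    intro y v h; simp [hE, extLeaf, h.1, h.2]
  have main : ∀ y, B.mulVec y = 0 → A.mulVec (E y) = 0 := by
    intro y hy
    funext v
    show (∑ w : V, A v w * E y w) = (0 : ℝ)
    rw [sum_ne2_subtype hlp (fun w => A v w * E y w), hEp, mul_zero, add_zero,
      Finset.sum_congr rfl (fun (w : {v : V // v ≠ l ∧ v ≠ p}) _ => by rw [hEw y ↑w w.2])]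
    by_cases h1 : v = l
    · rw [h1, hrow l hlp, zero_mul, zero_add]
      exact Finset.sum_eq_zero (fun w _ => by rw [hrow ↑w w.2.2, zero_mul])
    · by_cases h2 : v = p
      · rw [h2, hEl, neg_mul, mul_neg, ← mul_assoc, mul_inv_cancel₀ hApl, one_mul,
          neg_add_cancel]
      · rw [hcol v h2, zero_mul, zero_add]
        have h3 : (∑ w : {v : V // v ≠ l ∧ v ≠ p}, A v ↑w * y w) = B.mulVec y ⟨v, ⟨h1, h2⟩⟩ := rfl
        rw [h3, hy]; rfl
  have hmem : ∀ y : LinearMap.ker B.mulVecLin, E y.1 ∈ LinearMap.ker A.mulVecLin := by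
    intro y
    rw [LinearMap.mem_ker, Matrix.mulVecLin_apply]
    exact main y.1 (by have := y.2; rwa [LinearMap.mem_ker, Matrix.mulVecLin_apply] at this)
  let Ψ : LinearMap.ker B.mulVecLin →ₗ[ℝ] LinearMap.ker A.mulVecLin :=
    LinearMap.codRestrict _ (E.comp (Submodule.subtype _)) hmem
  have hbij : Function.Bijective Ψ := by
    constructor
    · intro y z hyz
      have h0 : E y.1 = E z.1 := congrArg Subtype.val hyz
      ext w
      have := congrFun h0 ↑w
      rwa [hEw _ _ w.2, hEw _ _ w.2] at this
    · rintro ⟨x, hx⟩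
      rw [LinearMap.mem_ker, Matrix.mulVecLin_apply] at hx
      have hxrow : ∀ v : V, (∑ w : V, A v w * x w) = 0 := fun v => congrFun hx v
      have hxp : x p = 0 := by
        have h0 := hxrow l
        rw [Finset.sum_eq_single p (fun w _ hw => by rw [hrow w hw, zero_mul])
          (fun h => absurd (Finset.mem_univ p) h)] at h0
        exact (mul_eq_zero.mp h0).resolve_left hα
      refine ⟨⟨fun w => x ↑w, ?_⟩, ?_⟩
      · rw [LinearMap.mem_ker, Matrix.mulVecLin_apply]
        funext v
        show (∑ w : {v : V // v ≠ l ∧ v ≠ p}, A ↑v ↑w * x ↑w) = (0 : ℝ)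
        have h0 := hxrow ↑v
        rw [sum_ne2_subtype hlp (fun w => A ↑v w * x w), hcol ↑v v.2.2, zero_mul, zero_add,
          hxp, mul_zero, zero_add] at h0
        exact h0
      · apply Subtype.ext
        show E (fun w => x ↑w) = x
        funext v
        by_cases h1 : v = l
        · rw [h1, hEl]
          have h0 := hxrow p
          rw [sum_ne2_subtype hlp (fun w => A p w * x w), hxp, mul_zero, add_zero] at h0
          have hsum : (∑ w : {v : V // v ≠ l ∧ v ≠ p},
              A p ↑w * (fun w : {v : V // v ≠ l ∧ v ≠ p} => x ↑w) w) = -(A p l * x l) := by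
            show (∑ w : {v : V // v ≠ l ∧ v ≠ p}, A p ↑w * x ↑w) = -(A p l * x l)
            linarith
          rw [hsum, neg_mul_neg, ← mul_assoc, inv_mul_cancel₀ hApl, one_mul]
        · by_cases h2 : v = p
          · rw [h2, hEp, hxp]
          · exact hEw _ _ ⟨h1, h2⟩
  exact (LinearEquiv.finrank_eq (LinearEquiv.ofBijective Ψ hbij)).symm

section matchhelp
variable {V : Type*} [Fintype V] [DecidableEq V]

lemma matching_bdd (G : SimpleGraph V) :
    BddAbove {k | ∃ M : Finset (Sym2 V), IsMatchingF G M ∧ M.card = k} := by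
  refine ⟨Fintype.card (Sym2 V), ?_⟩
  rintro k ⟨M, _, rfl⟩
  exact Finset.card_le_univ M

lemma matching_zero_mem (G : SimpleGraph V) :
    0 ∈ {k | ∃ M : Finset (Sym2 V), IsMatchingF G M ∧ M.card = k} :=
  ⟨∅, ⟨fun e he => absurd he (Finset.notMem_empty e),
    fun e he => absurd he (Finset.notMem_empty e)⟩, rfl⟩

lemma exists_max_matching (G : SimpleGraph V) :
    ∃ M : Finset (Sym2 V), IsMatchingF G M ∧ M.card = matchingNumber G :=
  Nat.sSup_mem ⟨0, matching_zero_mem G⟩ (matching_bdd G)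

lemma le_matchingNumber (G : SimpleGraph V) (M : Finset (Sym2 V)) (hM : IsMatchingF G M) :
    M.card ≤ matchingNumber G :=
  le_csSup (matching_bdd G) ⟨M, hM, rfl⟩

lemma matching_up (G : SimpleGraph V) (s : Set V) (M : Finset (Sym2 ↥s))
    (hM : IsMatchingF (G.induce s) M) :
    ∃ N : Finset (Sym2 V), IsMatchingF G N ∧ N.card = M.card ∧
      ∀ e ∈ N, ∀ v : V, v ∈ e → v ∈ s := by
  classical
  refine ⟨M.image (Sym2.map Subtype.val), ⟨?_, ?_⟩, ?_, ?_⟩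
  · intro e he
    obtain ⟨e', he', rfl⟩ := Finset.mem_image.mp he
    induction e' using Sym2.ind with
    | _ a b =>
      have := hM.1 _ he'
      simp only [Sym2.map_pair_eq, SimpleGraph.mem_edgeSet]
      simpa using this
  · intro e he f hf hef v hv
    obtain ⟨e', he', rfl⟩ := Finset.mem_image.mp he
    obtain ⟨f', hf', rfl⟩ := Finset.mem_image.mp hf
    obtain ⟨w1, hw1, hw1v⟩ := Sym2.mem_map.mp hv.1
    obtain ⟨w2, hw2, hw2v⟩ := Sym2.mem_map.mp hv.2
    have hw : w1 = w2 := Subtype.ext (hw1v.trans hw2v.symm)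
    exact hM.2 e' he' f' hf' (fun h => hef (by rw [h])) w1 ⟨hw1, hw ▸ hw2⟩
  · exact Finset.card_image_of_injective M (Sym2.map.injective Subtype.val_injective)
  · intro e he v hv
    obtain ⟨e', he', rfl⟩ := Finset.mem_image.mp he
    obtain ⟨w, hw, rfl⟩ := Sym2.mem_map.mp hv
    exact w.2

lemma matching_down (G : SimpleGraph V) (s : Set V) (M : Finset (Sym2 V))
    (hM : IsMatchingF G M) (hs : ∀ e ∈ M, ∀ v : V, v ∈ e → v ∈ s) :
    ∃ N : Finset (Sym2 ↥s), IsMatchingF (G.induce s) N ∧ N.card = M.card := by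
  classical
  rcases M.eq_empty_or_nonempty with rfl | ⟨e0, he0⟩
  · exact ⟨∅, ⟨fun e he => absurd he (Finset.notMem_empty e),
      fun e he => absurd he (Finset.notMem_empty e)⟩, rfl⟩
  have hne : Nonempty ↥s := by
    exact ⟨⟨e0.out.1, hs e0 he0 _ (Sym2.out_fst_mem e0)⟩⟩
  set f : V → ↥s := fun v => if h : v ∈ s then ⟨v, h⟩ else Classical.arbitrary _ with hf
  have hval : ∀ e ∈ M, Sym2.map Subtype.val (Sym2.map f e) = e := by
    intro e he
    induction e using Sym2.ind with
    | _ a b =>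
      have ha := hs _ he a (Sym2.mem_mk_left a b)
      have hb := hs _ he b (Sym2.mem_mk_right a b)
      simp [hf, ha, hb]
  have hmem : ∀ e ∈ M, ∀ v : ↥s, v ∈ Sym2.map f e → ↑v ∈ e := by
    intro e he v hv
    obtain ⟨w, hw, rfl⟩ := Sym2.mem_map.mp hv
    have hws := hs _ he w hw
    simpa [hf, hws] using hw
  refine ⟨M.image (Sym2.map f), ⟨?_, ?_⟩, ?_⟩
  · intro e he
    obtain ⟨e', he', rfl⟩ := Finset.mem_image.mp he
    have h1 := hM.1 _ he'
    induction e' using Sym2.ind with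
    | _ a b =>
      have ha := hs _ he' a (Sym2.mem_mk_left a b)
      have hb := hs _ he' b (Sym2.mem_mk_right a b)
      rw [SimpleGraph.mem_edgeSet] at h1
      simp only [Sym2.map_pair_eq, SimpleGraph.mem_edgeSet]
      have : f a = ⟨a, ha⟩ := by simp [hf, ha]
      have hfb : f b = ⟨b, hb⟩ := by simp [hf, hb]
      rw [this, hfb]
      simpa using h1
  · intro e he f2 hf2 hef v hv
    obtain ⟨e', he', rfl⟩ := Finset.mem_image.mp he
    obtain ⟨f', hf', rfl⟩ := Finset.mem_image.mp hf2
    have hne' : e' ≠ f' := fun h => hef (by rw [h])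
    exact hM.2 e' he' f' hf' hne' ↑v ⟨hmem _ he' v hv.1, hmem _ hf' v hv.2⟩
  · apply Finset.card_image_of_injOn
    intro a ha b hb hab
    rw [← hval a ha, ← hval b hb, hab]

end matchhelp

section graphhelp
variable {V : Type*} [Fintype V] [DecidableEq V]

lemma acyclic_induce (G : SimpleGraph V) (hG : G.IsAcyclic) (s : Set V) :
    (G.induce s).IsAcyclic := by
  intro v c hc
  exact hG (c.map (SimpleGraph.Embedding.comap (Function.Embedding.subtype _) G).toHom)
    (hc.map (Function.Embedding.subtype _).injective)

lemma exists_leaf (G : SimpleGraph V) (hG : G.IsAcyclic) {a0 b0 : V} (hab : G.Adj a0 b0) :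
    ∃ l p : V, G.Adj l p ∧ ∀ w, G.Adj l w → w = p := by
  classical
  set P := {n : ℕ | ∃ (a b : V) (p : G.Walk a b), p.IsPath ∧ p.length = n} with hP
  have hbdd : BddAbove P := by
    refine ⟨Fintype.card V, ?_⟩
    rintro n ⟨a, b, p, hp, rfl⟩
    exact le_of_lt hp.length_lt
  have h1 : (1 : ℕ) ∈ P := by
    refine ⟨a0, b0, SimpleGraph.Walk.cons hab SimpleGraph.Walk.nil, ?_, rfl⟩
    simp [SimpleGraph.Walk.cons_isPath_iff, hab.ne]
  obtain ⟨a, b, p, hp, hlen⟩ := Nat.sSup_mem ⟨1, h1⟩ hbdd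
  have hN1 : 1 ≤ sSup P := le_csSup hbdd h1
  cases p with
  | nil => simp at hlen; omega
  | cons h q =>
    rename_i c
    rw [SimpleGraph.Walk.cons_isPath_iff] at hp
    refine ⟨a, c, h, ?_⟩
    intro w hw
    by_contra hwc
    have hwa : w ≠ a := hw.ne'
    by_cases hws : w ∈ q.support
    · -- build a cycle
      set r := q.takeUntil w hws with hr
      have hrpath : r.IsPath := hp.1.takeUntil hws
      have hra : a ∉ r.support := fun hx =>
        hp.2 (SimpleGraph.Walk.support_takeUntil_subset q hws hx)
      set wAW := SimpleGraph.Walk.cons h r with hwAW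
      have hwAWpath : wAW.IsPath := by
        rw [hwAW, SimpleGraph.Walk.cons_isPath_iff]
        exact ⟨hrpath, hra⟩
      have hcyc : (SimpleGraph.Walk.cons hw.symm wAW).IsCycle := by
        rw [SimpleGraph.Walk.cons_isCycle_iff]
        refine ⟨hwAWpath, ?_⟩
        intro hmem
        rw [hwAW, SimpleGraph.Walk.edges_cons] at hmem
        rcases List.mem_cons.mp hmem with h1 | h2
        · rw [Sym2.eq_iff] at h1
          rcases h1 with ⟨h1, _⟩ | ⟨h1, h2⟩
          · exact hwa h1
          · exact hwc h1
        · exact hra (SimpleGraph.Walk.snd_mem_support_of_mem_edges r h2)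
      exact hG _ hcyc
    · -- extend the path
      have hwp : w ∉ (SimpleGraph.Walk.cons h q).support := by
        rw [SimpleGraph.Walk.support_cons]
        intro hx
        rcases List.mem_cons.mp hx with h1 | h2
        · exact hwa h1
        · exact hws h2
      have : (SimpleGraph.Walk.cons hw.symm (SimpleGraph.Walk.cons h q)).IsPath := by
        rw [SimpleGraph.Walk.cons_isPath_iff]
        constructor
        · rw [SimpleGraph.Walk.cons_isPath_iff]; exact hp
        · exact hwp
      have hmem : (SimpleGraph.Walk.cons hw.symm (SimpleGraph.Walk.cons h q)).length ∈ P :=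
        ⟨w, b, _, this, rfl⟩
      have := le_csSup hbdd hmem
      simp only [SimpleGraph.Walk.length_cons] at this hlen
      omega

lemma matchingNumber_le_induced_add_one (G : SimpleGraph V) (l p : V) (hadj : G.Adj l p)
    (hleaf : ∀ w, G.Adj l w → w = p) :
    matchingNumber G = matchingNumber (G.induce {v : V | v ≠ l ∧ v ≠ p}) + 1 := by
  set s : Set V := {v : V | v ≠ l ∧ v ≠ p} with hs
  apply le_antisymm
  · -- μ(G) ≤ μ' + 1
    obtain ⟨M, hM, hMcard⟩ := exists_max_matching G
    set M₀ := M.filter (fun e => l ∉ e ∧ p ∉ e) with hM₀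
    have hM₀sub : M₀ ⊆ M := Finset.filter_subset _ M
    have hMd : ∀ e ∈ M \ M₀, p ∈ e := by
      intro e he
      rw [Finset.mem_sdiff, hM₀, Finset.mem_filter] at he
      obtain ⟨heM, hne⟩ := he
      push_neg at hne
      by_cases hl : l ∈ e
      · -- e contains l hence is s(l,p)
        have hedge := hM.1 e heM
        induction e using Sym2.ind with
        | _ x y =>
          rw [SimpleGraph.mem_edgeSet] at hedge
          rw [Sym2.mem_iff] at hl ⊢
          rcases hl with rfl | rfl
          · right; exact (hleaf y hedge).symm
          · left; exact (hleaf x hedge.symm).symm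
      · exact hne heM hl
    have hcard1 : (M \ M₀).card ≤ 1 := by
      rw [Finset.card_le_one]
      intro e he f hf
      by_contra hef
      exact hM.2 e (Finset.mem_sdiff.mp he).1 f (Finset.mem_sdiff.mp hf).1 hef p
        ⟨hMd e he, hMd f hf⟩
    have hcardM₀ : M.card ≤ M₀.card + 1 := by
      have := Finset.card_sdiff_add_card_eq_card hM₀sub
      omega
    have hM₀match : IsMatchingF G M₀ :=
      ⟨fun e he => hM.1 e (hM₀sub he),
       fun e he f hf => hM.2 e (hM₀sub he) f (hM₀sub hf)⟩
    have hM₀s : ∀ e ∈ M₀, ∀ v : V, v ∈ e → v ∈ s := by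
      intro e he v hv
      rw [hM₀, Finset.mem_filter] at he
      exact ⟨fun h => he.2.1 (h ▸ hv), fun h => he.2.2 (h ▸ hv)⟩
    obtain ⟨N, hN, hNcard⟩ := matching_down G s M₀ hM₀match hM₀s
    have := le_matchingNumber (G.induce s) N hN
    omega
  · -- μ' + 1 ≤ μ(G)
    obtain ⟨N, hN, hNcard⟩ := exists_max_matching (G.induce s)
    obtain ⟨M, hM, hMcard, hMs⟩ := matching_up G s N hN
    have hlp : s(l, p) ∉ M := by
      intro h
      exact (hMs _ h l (Sym2.mem_mk_left l p)).1 rfl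
    have hmatch : IsMatchingF G (insert s(l, p) M) := by
      constructor
      · intro e he
        rcases Finset.mem_insert.mp he with rfl | h
        · exact hadj
        · exact hM.1 e h
      · intro e he f hf hef v hv
        rcases Finset.mem_insert.mp he with rfl | he' <;>
          rcases Finset.mem_insert.mp hf with rfl | hf'
        · exact hef rfl
        · rcases Sym2.mem_iff.mp hv.1 with rfl | rfl
          · exact (hMs f hf' v hv.2).1 rfl
          · exact (hMs f hf' v hv.2).2 rfl
        · rcases Sym2.mem_iff.mp hv.2 with rfl | rfl
          · exact (hMs e he' v hv.1).1 rfl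
          · exact (hMs e he' v hv.1).2 rfl
        · exact hM.2 e he' f hf' hef v hv
    have hcard : (insert s(l, p) M).card = N.card + 1 := by
      rw [Finset.card_insert_of_notMem hlp, hMcard]
    have := le_matchingNumber G _ hmatch
    omega

end graphhelp

lemma sadj_transpose {V : Type*} [Fintype V] [DecidableEq V] (G : SimpleGraph V)
    (σ : V → V → ℝ) (hsym : ∀ a b, σ a b = σ b a) : (sadj G σ)ᵀ = sadj G σ := by
  funext a b
  rw [Matrix.transpose_apply]
  unfold sadj
  by_cases h : G.Adj a b
  · rw [if_pos h, if_pos h.symm, hsym b a]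
  · rw [if_neg h, if_neg (fun h' => h h'.symm)]

lemma forest_formula : ∀ (n : ℕ) (V : Type u) [Fintype V] [DecidableEq V],
    Fintype.card V = n →
    ∀ (G : SimpleGraph V) (σ : V → V → ℝ), G.IsAcyclic → (∀ a b, σ a b = σ b a) →
    (∀ a b, G.Adj a b → σ a b ≠ 0) →
    nullity (sadj G σ) + 2 * matchingNumber G = Fintype.card V := by
  intro n
  induction n using Nat.strong_induction_on with
  | _ n IH =>
    intro V _ _ hcard G σ hG hsym hnz
    by_cases hedge : ∃ a b : V, G.Adj a b
    · obtain ⟨a0, b0, hab⟩ := hedge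
      obtain ⟨l, p, hadj, hleaf⟩ := exists_leaf G hG hab
      have hlp : l ≠ p := hadj.ne
      set s : Set V := {v : V | v ≠ l ∧ v ≠ p} with hs
      have hcard2 : 2 ≤ Fintype.card V := by
        have : Nontrivial V := ⟨⟨l, p, hlp⟩⟩
        exact Fintype.one_lt_card
      have hcards : Fintype.card ↥s = Fintype.card V - 2 := by
        have h1 : Fintype.card ↥s = (Finset.univ.filter (fun v : V => v ≠ l ∧ v ≠ p)).card :=
          Fintype.card_subtype _
        have h2 : Finset.univ.filter (fun v : V => v ≠ l ∧ v ≠ p)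
            = Finset.univ \ {l, p} := by
          ext v
          simp only [Finset.mem_filter, Finset.mem_univ, true_and, Finset.mem_sdiff,
            Finset.mem_insert, Finset.mem_singleton]
          tauto
        have h3 : ({l, p} : Finset V).card = 2 := Finset.card_pair hlp
        rw [h1, h2, Finset.card_sdiff_of_subset (Finset.subset_univ _), h3, Finset.card_univ]
      have hlt : Fintype.card V - 2 < n := by omega
      have hind := IH (Fintype.card V - 2) hlt ↥s hcards (G.induce s)
        (fun a b => σ ↑a ↑b) (acyclic_induce G hG s)
        (fun a b => hsym ↑a ↑b)
        (fun a b hab' => hnz ↑a ↑b hab')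
      -- identify the two matrices
      have hmat : sadj (G.induce s) (fun a b => σ ↑a ↑b)
          = (sadj G σ).submatrix (Subtype.val : ↥s → V) Subtype.val := by
        funext a b; rfl
      have heta : nullity (sadj G σ) = nullity (sadj (G.induce s) (fun a b => σ ↑a ↑b)) := by
        rw [hmat]
        have hApl : sadj G σ l p ≠ 0 := by
          unfold sadj; rw [if_pos hadj]; exact hnz l p hadj
        have hrow : ∀ w, w ≠ p → sadj G σ l w = 0 := by
          intro w hw
          unfold sadj
          by_cases h : G.Adj l w
          · exact absurd (hleaf w h) hw
          · rw [if_neg h]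
        exact nullity_leaf (sadj G σ) (sadj_transpose G σ hsym) l p hlp hApl hrow
      have hmu := matchingNumber_le_induced_add_one G l p hadj hleaf
      rw [← hs] at hmu
      rw [heta, hmu]
      rw [hcards] at hind
      omega
    · -- no edges
      push_neg at hedge
      have hmat : sadj G σ = 0 := by
        funext a b
        unfold sadj
        rw [if_neg (hedge a b)]
        rfl
      have hnull : nullity (sadj G σ) = Fintype.card V := by
        rw [hmat]
        unfold nullity
        rw [Matrix.mulVecLin_zero, LinearMap.ker_zero, finrank_top]
        simp [Module.finrank_pi]
      have hmu : matchingNumber G = 0 := by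
        apply Nat.le_antisymm _ (Nat.zero_le _)
        apply csSup_le ⟨0, matching_zero_mem G⟩
        rintro k ⟨M, hM, rfl⟩
        rcases M.eq_empty_or_nonempty with rfl | ⟨e, he⟩
        · simp
        · have := hM.1 e he
          induction e using Sym2.ind with
          | _ a b =>
            rw [SimpleGraph.mem_edgeSet] at this
            exact absurd this (hedge a b)
      rw [hnull, hmu]
      omega

lemma ker_vanish_at_matched {V : Type*} [Fintype V] [DecidableEq V]
    (G : SimpleGraph V) (σ : V → V → ℝ) (hG : G.IsAcyclic)
    (hsym : ∀ a b, σ a b = σ b a) (hnz : ∀ a b, G.Adj a b → σ a b ≠ 0)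
    (u : V) (hu : MatchedIn G u) (x : V → ℝ) (hx : (sadj G σ).mulVec x = 0) : x u = 0 := by
  by_contra hxu
  set s : Set V := {v : V | v ≠ u} with hs
  have hmat : sadj (G.induce s) (fun a b => σ ↑a ↑b)
      = (sadj G σ).submatrix (Subtype.val : ↥s → V) Subtype.val := by
    funext a b; rfl
  have hsub : {v : V // v ≠ u} = ↥s := rfl
  have hdel : nullity ((sadj G σ).submatrix (Subtype.val : ↥s → V) Subtype.val) + 1
      ≤ nullity (sadj G σ) :=
    nullity_del_add_one_le (sadj G σ) (sadj_transpose G σ hsym) u x hx hxu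
  have hcards : Fintype.card ↥s = Fintype.card V - 1 := by
    have h1 : Fintype.card ↥s = (Finset.univ.filter (fun v : V => v ≠ u)).card :=
      Fintype.card_subtype _
    have h2 : Finset.univ.filter (fun v : V => v ≠ u) = Finset.univ \ {u} := by
      ext v
      simp only [Finset.mem_filter, Finset.mem_univ, true_and, Finset.mem_sdiff,
        Finset.mem_singleton]
    rw [h1, h2, Finset.card_sdiff_of_subset (Finset.subset_univ _), Finset.card_singleton,
      Finset.card_univ]
  have hpos : 1 ≤ Fintype.card V := Fintype.card_pos_iff.mpr ⟨u⟩
  have hfG := forest_formula (Fintype.card V) V rfl G σ hG hsym hnz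
  have hfG' := forest_formula (Fintype.card ↥s) ↥s rfl (G.induce s)
    (fun a b => σ ↑a ↑b) (acyclic_induce G hG s) (fun a b => hsym ↑a ↑b)
    (fun a b hab => hnz ↑a ↑b hab)
  rw [hmat] at hfG'
  -- μ(G - u) ≤ μ(G)
  obtain ⟨N, hN, hNcard⟩ := exists_max_matching (G.induce s)
  obtain ⟨M, hM, hMcard, hMs⟩ := matching_up G s N hN
  have hmule : matchingNumber (G.induce s) ≤ matchingNumber G := by
    have := le_matchingNumber G M hM
    omega
  -- now conclude equality and get a maximum matching avoiding u
  have hMmax : M.card = matchingNumber G := by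
    rw [hcards] at hfG'
    omega
  obtain ⟨e, heM, heu⟩ := hu M hM hMmax
  exact (hMs e heM u heu) rfl

lemma exists_preimage {V : Type*} [Fintype V] [DecidableEq V] (A : Matrix V V ℝ)
    (hA : Aᵀ = A) (b : V → ℝ)
    (hb : ∀ x, A.mulVec x = 0 → b ⬝ᵥ x = 0) : ∃ z, A.mulVec z = b := by
  set R := LinearMap.range A.mulVecLin with hR
  set K := LinearMap.ker A.mulVecLin with hK
  have hsymdot : ∀ (x w : V → ℝ), (A.mulVec x) ⬝ᵥ w = x ⬝ᵥ (A.mulVec w) := by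
    intro x w
    rw [Matrix.dotProduct_mulVec, ← Matrix.mulVec_transpose, hA,
      dotProduct_comm, Matrix.dotProduct_mulVec, ← Matrix.mulVec_transpose, hA,
      dotProduct_comm]
  have hdisj : R ⊓ K = ⊥ := by
    rw [Submodule.eq_bot_iff]
    intro w hw
    rw [Submodule.mem_inf] at hw
    obtain ⟨hwR, hwK⟩ := hw
    obtain ⟨x, hx⟩ := hwR
    rw [Matrix.mulVecLin_apply] at hx
    rw [LinearMap.mem_ker, Matrix.mulVecLin_apply] at hwK
    have : w ⬝ᵥ w = 0 := by
      rw [← hx, hsymdot, hx, hwK]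
      simp [dotProduct]
    exact dotProduct_self_eq_zero.mp this
  have htop : R ⊔ K = ⊤ := by
    apply Submodule.eq_top_of_finrank_eq
    have h1 := Submodule.finrank_sup_add_finrank_inf_eq R K
    rw [hdisj] at h1
    have h2 := LinearMap.finrank_range_add_finrank_ker A.mulVecLin
    simp only [finrank_bot, add_zero] at h1
    rw [h1, h2]
  have hbmem : b ∈ R ⊔ K := htop ▸ Submodule.mem_top
  obtain ⟨r, hrR, k, hkK, hrk⟩ := Submodule.mem_sup.mp hbmem
  obtain ⟨z, hz⟩ := hrR
  rw [Matrix.mulVecLin_apply] at hz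
  rw [LinearMap.mem_ker, Matrix.mulVecLin_apply] at hkK
  have hbk : b ⬝ᵥ k = 0 := hb k hkK
  have hrkdot : r ⬝ᵥ k = 0 := by
    rw [← hz, hsymdot, hkK]
    simp [dotProduct]
  have hkk : k ⬝ᵥ k = 0 := by
    have : (r + k) ⬝ᵥ k = 0 := hrk ▸ hbk
    rw [add_dotProduct, hrkdot, zero_add] at this
    exact this
  have hk0 : k = 0 := dotProduct_self_eq_zero.mp hkk
  refine ⟨z, ?_⟩
  rw [hz, ← hrk, hk0, add_zero]

lemma tree_dist_parity {V : Type*} (T : SimpleGraph V) (hT : T.IsTree) (u : V)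
    {a b : V} (hab : T.Adj a b) : (T.dist u a) % 2 ≠ (T.dist u b) % 2 := by
  have hconn := hT.isConnected
  have h1 : T.dist a b = 1 := SimpleGraph.dist_eq_one_iff_adj.mpr hab
  have h2 : T.dist u b ≤ T.dist u a + 1 := by
    have := hconn.dist_triangle (u := u) (v := a) (w := b)
    omega
  have h3 : T.dist u a ≤ T.dist u b + 1 := by
    have h1' : T.dist b a = 1 := SimpleGraph.dist_eq_one_iff_adj.mpr hab.symm
    have := hconn.dist_triangle (u := u) (v := b) (w := a)
    omega
  have hne : T.dist u a ≠ T.dist u b := by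
    intro heq
    -- construct two distinct paths from u to b
    obtain ⟨q0, hq0⟩ := hconn.exists_walk_length_eq_dist u b
    have hqb : q0.bypass.IsPath := SimpleGraph.Walk.bypass_isPath q0
    have hqblen : q0.bypass.length = T.dist u b :=
      le_antisymm (hq0 ▸ SimpleGraph.Walk.length_bypass_le q0)
        (SimpleGraph.dist_le q0.bypass)
    obtain ⟨p0, hp0⟩ := hconn.exists_walk_length_eq_dist u a
    have hpb : p0.bypass.IsPath := SimpleGraph.Walk.bypass_isPath p0
    have hpblen : p0.bypass.length = T.dist u a :=
      le_antisymm (hp0 ▸ SimpleGraph.Walk.length_bypass_le p0)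
        (SimpleGraph.dist_le p0.bypass)
    set p := p0.bypass with hp
    have hbs : b ∉ p.support := by
      intro hbsup
      have htake := SimpleGraph.Walk.take_spec p hbsup
      have hlen : (p.takeUntil b hbsup).length + (p.dropUntil b hbsup).length = p.length := by
        rw [← SimpleGraph.Walk.length_append, htake]
      have hdrop1 : 1 ≤ (p.dropUntil b hbsup).length := by
        by_contra hcon
        push_neg at hcon
        have h0 : (p.dropUntil b hbsup).length = 0 := by omega
        have := SimpleGraph.Walk.eq_of_length_eq_zero h0
        exact hab.ne' (this ▸ rfl)
      have hdistle : T.dist u b ≤ (p.takeUntil b hbsup).length :=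
        SimpleGraph.dist_le _
      omega
    -- second path: u → a → b
    set p2 := (SimpleGraph.Walk.cons hab.symm p.reverse).reverse with hp2
    have hp2path : p2.IsPath := by
      apply SimpleGraph.Walk.IsPath.reverse
      rw [SimpleGraph.Walk.cons_isPath_iff]
      exact ⟨hpb.reverse, by rwa [SimpleGraph.Walk.support_reverse, List.mem_reverse]⟩
    have hp2len : p2.length = T.dist u a + 1 := by
      rw [hp2, SimpleGraph.Walk.length_reverse, SimpleGraph.Walk.length_cons,
        SimpleGraph.Walk.length_reverse, hpblen]
    have heqp := hT.IsAcyclic.path_unique ⟨q0.bypass, hqb⟩ ⟨p2, hp2path⟩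
    have hleq : q0.bypass.length = p2.length :=
      congrArg SimpleGraph.Walk.length (congrArg Subtype.val heqp)
    rw [hqblen, hp2len, ← heq] at hleq
    omega
  omega

end helpers

/-- if u is matched in the signed tree T, then for any 1 ≤ k ≤ n,
η(T(u) ⊙ᵏ Γ) = η(T) + η(Γ). -/
theorem stmt14 {V₁ V₂ : Type*} [Fintype V₁] [DecidableEq V₁] [Fintype V₂] [DecidableEq V₂]
    (T : SimpleGraph V₁) (σ₁ : V₁ → V₁ → ℝ) (hT : T.IsTree)
    (hsym₁ : ∀ a b, σ₁ a b = σ₁ b a)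
    (hpm₁ : ∀ a b, T.Adj a b → σ₁ a b = 1 ∨ σ₁ a b = -1)
    (Γ : SimpleGraph V₂) (σ₂ : V₂ → V₂ → ℝ)
    (hsym₂ : ∀ a b, σ₂ a b = σ₂ b a)
    (hpm₂ : ∀ a b, Γ.Adj a b → σ₂ a b = 1 ∨ σ₂ a b = -1)
    (u : V₁) (hu : MatchedIn T u)
    (k : ℕ) (hk1 : 1 ≤ k) (hk2 : k ≤ Fintype.card V₂)
    (S : Finset V₂) (hS : S.card = k)
    (τ : (V₁ ⊕ V₂) → (V₁ ⊕ V₂) → ℝ)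
    (hτsym : ∀ p q, τ p q = τ q p)
    (hτpm : ∀ p q, (joinGraph T Γ u S).Adj p q → τ p q = 1 ∨ τ p q = -1)
    (hτ₁ : ∀ a b : V₁, τ (Sum.inl a) (Sum.inl b) = σ₁ a b)
    (hτ₂ : ∀ a b : V₂, τ (Sum.inr a) (Sum.inr b) = σ₂ a b) :
    nullity (sadj (joinGraph T Γ u S) τ) =
      nullity (sadj T σ₁) + nullity (sadj Γ σ₂) := by
  classical
  set A₁ := sadj T σ₁ with hA₁
  set A₂ := sadj Γ σ₂ with hA₂
  set A := sadj (joinGraph T Γ u S) τ with hA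
  have hnz₁ : ∀ a b, T.Adj a b → σ₁ a b ≠ 0 := by
    intro a b h
    rcases hpm₁ a b h with h' | h' <;> rw [h'] <;> norm_num
  have hker1 : ∀ x : V₁ → ℝ, A₁.mulVec x = 0 → x u = 0 :=
    ker_vanish_at_matched T σ₁ hT.IsAcyclic hsym₁ hnz₁ u hu
  -- get z with A₁ z = e_u
  obtain ⟨z0, hz0⟩ := exists_preimage A₁ (sadj_transpose T σ₁ hsym₁) (Pi.single u 1)
    (fun x hx => by
      have : Pi.single u (1:ℝ) ⬝ᵥ x = x u := by
        simp [dotProduct, Pi.single_apply, ite_mul, Finset.sum_ite_eq]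
      rw [this]
      exact hker1 x hx)
  -- make z vanish at u using bipartiteness
  set z : V₁ → ℝ := fun v => if (T.dist u v) % 2 = 1 then z0 v else 0 with hzdef
  have hzu : z u = 0 := by
    rw [hzdef]
    simp [SimpleGraph.dist_self]
  have hz : A₁.mulVec z = Pi.single u 1 := by
    funext v
    by_cases hv : (T.dist u v) % 2 = 1
    · -- odd vertex : row is zero and v ≠ u
      have hvu : v ≠ u := by
        intro h
        rw [h, SimpleGraph.dist_self] at hv
        simp at hv
      have hrow : ∀ w, A₁ v w * z w = 0 := by
        intro w
        by_cases hA0 : A₁ v w = 0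
        · rw [hA0, zero_mul]
        · have hadj : T.Adj v w := by
            by_contra hc
            rw [hA₁] at hA0
            unfold sadj at hA0
            rw [if_neg hc] at hA0
            exact hA0 rfl
          have hpar := tree_dist_parity T hT u hadj
          have hzw : z w = 0 := by
            rw [hzdef]
            have h2 : (T.dist u w) % 2 ≠ 1 := by omega
            simp [h2]
          rw [hzw, mul_zero]
      rw [show (A₁.mulVec z) v = ∑ w : V₁, A₁ v w * z w from rfl]
      rw [Finset.sum_eq_zero (fun w _ => hrow w), Pi.single_apply, if_neg hvu]
    · -- even vertex : same value as with z0
      have hrow : ∀ w, A₁ v w * z w = A₁ v w * z0 w := by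
        intro w
        by_cases hA0 : A₁ v w = 0
        · rw [hA0, zero_mul, zero_mul]
        · have hadj : T.Adj v w := by
            by_contra hc
            rw [hA₁] at hA0
            unfold sadj at hA0
            rw [if_neg hc] at hA0
            exact hA0 rfl
          have hpar := tree_dist_parity T hT u hadj
          have hmod : (T.dist u v) % 2 = 0 := by omega
          have h2 : (T.dist u w) % 2 = 1 := by omega
          rw [hzdef]
          simp [h2]
      rw [show (A₁.mulVec z) v = ∑ w : V₁, A₁ v w * z w from rfl]
      rw [Finset.sum_congr rfl (fun w _ => hrow w)]
      exact congrFun hz0 v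
  -- block identities
  have hAsym : ∀ p q, A p q = A q p := by
    intro p q
    have h := congrFun (congrFun (sadj_transpose (joinGraph T Γ u S) τ hτsym) p) q
    rw [Matrix.transpose_apply] at h
    exact h.symm
  have hadj_ll : ∀ a b : V₁, (joinGraph T Γ u S).Adj (Sum.inl a) (Sum.inl b) ↔ T.Adj a b := by
    intro a b
    unfold joinGraph
    rw [SimpleGraph.fromRel_adj]
    constructor
    · rintro ⟨hne, h | h⟩
      · exact h
      · exact h.symm
    · intro h
      exact ⟨by simpa using h.ne, Or.inl h⟩
  have hadj_rr : ∀ a b : V₂, (joinGraph T Γ u S).Adj (Sum.inr a) (Sum.inr b) ↔ Γ.Adj a b := by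
    intro a b
    unfold joinGraph
    rw [SimpleGraph.fromRel_adj]
    constructor
    · rintro ⟨hne, h | h⟩
      · exact h
      · exact h.symm
    · intro h
      exact ⟨by simpa using h.ne, Or.inl h⟩
  have hAll : ∀ a b : V₁, A (Sum.inl a) (Sum.inl b) = A₁ a b := by
    intro a b
    rw [hA, hA₁]
    unfold sadj
    by_cases h : T.Adj a b
    · rw [if_pos ((hadj_ll a b).mpr h), if_pos h, hτ₁]
    · rw [if_neg (fun h' => h ((hadj_ll a b).mp h')), if_neg h]
  have hArr : ∀ a b : V₂, A (Sum.inr a) (Sum.inr b) = A₂ a b := by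
    intro a b
    rw [hA, hA₂]
    unfold sadj
    by_cases h : Γ.Adj a b
    · rw [if_pos ((hadj_rr a b).mpr h), if_pos h, hτ₂]
    · rw [if_neg (fun h' => h ((hadj_rr a b).mp h')), if_neg h]
  set r : V₂ → ℝ := fun c => A (Sum.inl u) (Sum.inr c) with hrdef
  have hAlr : ∀ (a : V₁) (c : V₂), A (Sum.inl a) (Sum.inr c) = if a = u then r c else 0 := by
    intro a c
    by_cases ha : a = u
    · rw [ha, if_pos rfl]
    · rw [if_neg ha, hA]
      unfold sadj
      rw [if_neg]
      intro hadj
      unfold joinGraph at hadj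
      rw [SimpleGraph.fromRel_adj] at hadj
      rcases hadj with ⟨_, h | h⟩
      · exact ha h.1
      · exact h
  have hArl : ∀ (c : V₂) (a : V₁), A (Sum.inr c) (Sum.inl a) = if a = u then r c else 0 := by
    intro c a
    rw [hAsym, hAlr]
  -- mulVec block formulas
  have hmv_l : ∀ (x : V₁ ⊕ V₂ → ℝ) (a : V₁),
      A.mulVec x (Sum.inl a)
        = A₁.mulVec (x ∘ Sum.inl) a + (if a = u then r ⬝ᵥ (x ∘ Sum.inr) else 0) := by
    intro x a
    show (∑ q : V₁ ⊕ V₂, A (Sum.inl a) q * x q) = _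
    rw [Fintype.sum_sum_type]
    congr 1
    · exact Finset.sum_congr rfl (fun b _ => by rw [hAll]; rfl)
    · by_cases ha : a = u
      · rw [if_pos ha]
        exact Finset.sum_congr rfl (fun c _ => by rw [hAlr, if_pos ha]; rfl)
      · rw [if_neg ha]
        exact Finset.sum_eq_zero (fun c _ => by rw [hAlr, if_neg ha, zero_mul])
  have hmv_r : ∀ (x : V₁ ⊕ V₂ → ℝ) (c : V₂),
      A.mulVec x (Sum.inr c) = x (Sum.inl u) * r c + A₂.mulVec (x ∘ Sum.inr) c := by
    intro x c
    show (∑ q : V₁ ⊕ V₂, A (Sum.inr c) q * x q) = _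
    rw [Fintype.sum_sum_type]
    congr 1
    · rw [show (∑ b : V₁, A (Sum.inr c) (Sum.inl b) * x (Sum.inl b))
          = ∑ b : V₁, if b = u then r c * x (Sum.inl b) else 0 from
        Finset.sum_congr rfl (fun b _ => by rw [hArl]; split_ifs <;> simp)]
      rw [Finset.sum_ite_eq' Finset.univ u (fun b => r c * x (Sum.inl b))]
      simp [mul_comm]
    · exact Finset.sum_congr rfl (fun c' _ => by rw [hArr]; rfl)
  -- the linear map
  set K₁ := LinearMap.ker A₁.mulVecLin with hK₁
  set K₂ := LinearMap.ker A₂.mulVecLin with hK₂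
  let Φ : (K₁ × K₂) →ₗ[ℝ] (V₁ ⊕ V₂ → ℝ) :=
    { toFun := fun q => Sum.elim (q.1.1 - (r ⬝ᵥ q.2.1) • z) q.2.1
      map_add' := fun q q' => by
        funext w
        cases w with
        | inl a =>
          simp only [Sum.elim_inl, Submodule.coe_add, Pi.add_apply, Pi.sub_apply,
            Pi.smul_apply, smul_eq_mul, Prod.fst_add, Prod.snd_add, add_dotProduct,
            dotProduct_add]
          ring
        | inr c =>
          simp only [Sum.elim_inr, Submodule.coe_add, Pi.add_apply, Prod.snd_add]
      map_smul' := fun c q => by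
        funext w
        cases w with
        | inl a =>
          simp only [Sum.elim_inl, Submodule.coe_smul, Pi.smul_apply, smul_eq_mul,
            Prod.smul_fst, Prod.smul_snd, Pi.sub_apply, RingHom.id_apply,
            dotProduct_smul]
          ring
        | inr c' =>
          simp only [Sum.elim_inr, Submodule.coe_smul, Pi.smul_apply, Prod.smul_snd,
            RingHom.id_apply] }
  have hΦapp : ∀ q, Φ q = Sum.elim (q.1.1 - (r ⬝ᵥ q.2.1) • z) q.2.1 := fun q => rfl
  have hmemK₁ : ∀ (w : K₁), A₁.mulVec w.1 = 0 := by
    intro w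
    have h := LinearMap.mem_ker.mp w.2
    rwa [Matrix.mulVecLin_apply] at h
  have hmemK₂ : ∀ (y : K₂), A₂.mulVec y.1 = 0 := by
    intro y
    have h := LinearMap.mem_ker.mp y.2
    rwa [Matrix.mulVecLin_apply] at h
  have hΦker : ∀ q, Φ q ∈ LinearMap.ker A.mulVecLin := by
    intro q
    rw [LinearMap.mem_ker, Matrix.mulVecLin_apply]
    funext w
    rw [hΦapp]
    cases w with
    | inl a =>
      rw [hmv_l]
      have hcompl : (Sum.elim (q.1.1 - (r ⬝ᵥ q.2.1) • z) q.2.1) ∘ Sum.inl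
          = q.1.1 - (r ⬝ᵥ q.2.1) • z := rfl
      have hcompr : (Sum.elim (q.1.1 - (r ⬝ᵥ q.2.1) • z) q.2.1) ∘ Sum.inr = q.2.1 := rfl
      rw [hcompl, hcompr, Matrix.mulVec_sub, Matrix.mulVec_smul, hmemK₁ q.1, hz]
      by_cases ha : a = u
      · subst ha
        simp
      · simp [Pi.single_apply, ha]
    | inr c =>
      rw [hmv_r]
      have hcompr : (Sum.elim (q.1.1 - (r ⬝ᵥ q.2.1) • z) q.2.1) ∘ Sum.inr = q.2.1 := rfl
      rw [hcompr, hmemK₂ q.2]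
      have hwu : q.1.1 u = 0 := hker1 q.1.1 (hmemK₁ q.1)
      simp only [Pi.zero_apply, Sum.elim_inl, Pi.sub_apply, Pi.smul_apply, smul_eq_mul]
      rw [hwu, hzu, mul_zero, sub_zero, zero_mul, zero_add]
  have hbij : Function.Bijective (Φ.codRestrict _ hΦker) := by
    constructor
    · intro q q' hqq'
      have h0 : Φ q = Φ q' := congrArg Subtype.val hqq'
      rw [hΦapp, hΦapp] at h0
      have hy : q.2.1 = q'.2.1 := funext (fun c => congrFun h0 (Sum.inr c))
      have hy2 : q.2 = q'.2 := Subtype.ext hy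
      have hw : q.1.1 = q'.1.1 := by
        have h1 : ∀ a, q.1.1 a - (r ⬝ᵥ q.2.1) * z a = q'.1.1 a - (r ⬝ᵥ q'.2.1) * z a :=
          fun a => congrFun h0 (Sum.inl a)
        funext a
        have := h1 a
        rw [hy] at this
        linarith
      exact Prod.ext (Subtype.ext hw) hy2
    · rintro ⟨x, hx⟩
      rw [LinearMap.mem_ker, Matrix.mulVecLin_apply] at hx
      have hxl : ∀ a : V₁, A₁.mulVec (x ∘ Sum.inl) a
          + (if a = u then r ⬝ᵥ (x ∘ Sum.inr) else 0) = 0 := by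
        intro a
        rw [← hmv_l x a]
        exact congrFun hx (Sum.inl a)
      have hxr : ∀ c : V₂, x (Sum.inl u) * r c + A₂.mulVec (x ∘ Sum.inr) c = 0 := by
        intro c
        rw [← hmv_r x c]
        exact congrFun hx (Sum.inr c)
      set cc := r ⬝ᵥ (x ∘ Sum.inr) with hcc
      have hw0 : A₁.mulVec (x ∘ Sum.inl + cc • z) = 0 := by
        rw [Matrix.mulVec_add, Matrix.mulVec_smul, hz]
        funext a
        have := hxl a
        by_cases ha : a = u
        · rw [if_pos ha] at this
          rw [ha] at this
          show A₁.mulVec (x ∘ Sum.inl) a + cc * ((Pi.single u (1:ℝ) : V₁ → ℝ) a) = (0 : V₁ → ℝ) a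
          rw [ha, Pi.single_eq_same, mul_one]
          simpa using this
        · rw [if_neg ha, add_zero] at this
          show A₁.mulVec (x ∘ Sum.inl) a + cc * ((Pi.single u (1:ℝ) : V₁ → ℝ) a) = (0 : V₁ → ℝ) a
          rw [Pi.single_apply, if_neg ha, mul_zero, add_zero, this]
          rfl
      have hxu : x (Sum.inl u) = 0 := by
        have h1 := hker1 _ hw0
        have h2 : (x ∘ Sum.inl + cc • z) u = x (Sum.inl u) + cc * z u := rfl
        rw [h2, hzu, mul_zero, add_zero] at h1
        exact h1
      have hy0 : A₂.mulVec (x ∘ Sum.inr) = 0 := by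
        funext c
        have := hxr c
        rw [hxu, zero_mul, zero_add] at this
        rw [this]
        rfl
      refine ⟨⟨⟨x ∘ Sum.inl + cc • z, ?_⟩, ⟨x ∘ Sum.inr, ?_⟩⟩, ?_⟩
      · rw [hK₁, LinearMap.mem_ker, Matrix.mulVecLin_apply]
        exact hw0
      · rw [hK₂, LinearMap.mem_ker, Matrix.mulVecLin_apply]
        exact hy0
      · apply Subtype.ext
        show Φ _ = x
        rw [hΦapp]
        funext w
        cases w with
        | inl a =>
          show (x ∘ Sum.inl + cc • z) a - (r ⬝ᵥ (x ∘ Sum.inr)) * z a = x (Sum.inl a)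
          rw [← hcc]
          show x (Sum.inl a) + cc * z a - cc * z a = x (Sum.inl a)
          ring
        | inr c => rfl
  have hequiv := LinearEquiv.ofBijective _ hbij
  have hfr := LinearEquiv.finrank_eq hequiv
  rw [Module.finrank_prod] at hfr
  unfold nullity
  rw [← hfr, hK₁, hK₂]
end

section
/- A unicyclic signed graph Γ on n vertices satisfies η(Γ) = n − 2 if and only if Γ is a balanced cycle on 4 vertices. -/
open scoped Classical

open Module Submodule

section stmt17aux

variable {V : Type*} [Fintype V] [DecidableEq V]

lemma stmt17_col_mem_range (G : SimpleGraph V) (σ : V → V → ℝ) (j : V) :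
    (fun i => sadj G σ i j) ∈ LinearMap.range (Matrix.mulVecLin (sadj G σ)) := by
  rw [Matrix.range_mulVecLin]
  exact Submodule.subset_span ⟨j, rfl⟩

set_option linter.unusedSectionVars false in
lemma stmt17_walkSign_theta (G : SimpleGraph V) (σ : V → V → ℝ)
    (θ : V → ℝ) (hθ : ∀ a, θ a * θ a = 1)
    (hedge : ∀ a b, G.Adj a b → σ a b = θ a * θ b) :
    ∀ {p q : V} (w : G.Walk p q), walkSign G σ w = θ p * θ q := by
  intro p q w
  induction w with
  | nil => simp [walkSign, hθ]
  | @cons a m q h w ih =>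
      have hc : walkSign G σ (SimpleGraph.Walk.cons h w) = σ a m * walkSign G σ w := by
        simp [walkSign]
      rw [hc, ih, hedge _ _ h,
        show θ a * θ m * (θ m * θ q) = θ a * (θ m * θ m) * θ q by ring, hθ m]
      ring

set_option linter.unusedSectionVars false in
lemma stmt17_span_pair_finrank {x y : V → ℝ} (h : LinearIndependent ℝ ![x, y]) :
    finrank ℝ (span ℝ ({x, y} : Set (V → ℝ))) = 2 := by
  have h2 := finrank_span_eq_card h
  have hr : Set.range ![x, y] = {x, y} := by
    ext z; simp [Fin.exists_fin_two, or_comm]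
  rw [hr] at h2
  simpa using h2

lemma stmt17_pair_other {α : Type*} {s : Set α} {u : α} (h : s.ncard = 2) (hu : u ∈ s) :
    ∃ x, x ≠ u ∧ s = {u, x} := by
  obtain ⟨c, d, hcd, rfl⟩ := Set.ncard_eq_two.1 h
  rcases hu with rfl | hu
  · exact ⟨d, fun h => hcd h.symm, rfl⟩
  · rcases hu with rfl
    exact ⟨c, hcd, Set.pair_comm c u⟩

end stmt17aux

set_option maxHeartbeats 1600000 in
/-- a unicyclic signed graph Γ on n vertices has η(Γ) = n − 2 iff Γ is a
balanced cycle on 4 vertices. -/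
theorem stmt17 {V : Type*} [Fintype V] [DecidableEq V]
    (G : SimpleGraph V) (σ : V → V → ℝ)
    (hconn : G.Connected) (huni : G.edgeSet.ncard = Fintype.card V)
    (hsym : ∀ u v, σ u v = σ v u)
    (hpm : ∀ u v, G.Adj u v → σ u v = 1 ∨ σ u v = -1) :
    nullity (sadj G σ) = Fintype.card V - 2 ↔
      (Fintype.card V = 4 ∧ (∀ v, (G.neighborSet v).ncard = 2) ∧ BalancedSG G σ) := by
  classical
  have hne : Nonempty V := hconn.nonempty
  set A := sadj G σ with hAdef
  have hA0 : ∀ i j, ¬ G.Adj i j → A i j = 0 := fun i j h => if_neg h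
  have hAadj : ∀ i j, G.Adj i j → A i j = σ i j := fun i j h => if_pos h
  have hApm : ∀ i j, G.Adj i j → A i j = 1 ∨ A i j = -1 := fun i j h =>
    (hAadj i j h) ▸ hpm i j h
  have hAne : ∀ i j, G.Adj i j → A i j ≠ 0 := by
    intro i j h; rcases hApm i j h with h' | h' <;> rw [h'] <;> norm_num
  have hAsq : ∀ i j, G.Adj i j → A i j * A i j = 1 := by
    intro i j h; rcases hApm i j h with h' | h' <;> rw [h'] <;> norm_num
  have hAsymm : ∀ i j, A i j = A j i := by
    intro i j; by_cases h : G.Adj i j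
    · rw [hAadj i j h, hAadj j i h.symm, hsym]
    · rw [hA0 i j h, hA0 j i fun h' => h h'.symm]
  have hAdiag : ∀ i, A i i = 0 := fun i => hA0 i i (G.irrefl)
  have hadj_of_ne : ∀ i j, A i j ≠ 0 → G.Adj i j := by
    intro i j h; by_contra h'; exact h (hA0 i j h')
  have hE : G.edgeFinset.card = Fintype.card V := by
    rw [← huni, ← Set.ncard_coe_finset G.edgeFinset, SimpleGraph.coe_edgeFinset]
  have hn3 : 3 ≤ Fintype.card V := by
    have h1 : 1 ≤ Fintype.card V := Fintype.card_pos
    have h2 := SimpleGraph.card_edgeFinset_le_card_choose_two (G := G)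
    rw [hE, Nat.choose_two_right] at h2
    by_contra hlt
    push_neg at hlt
    obtain ⟨k, hk⟩ : ∃ k, Fintype.card V = k := ⟨_, rfl⟩
    rw [hk] at h1 h2 hlt
    interval_cases k <;> omega
  have hrn : finrank ℝ (LinearMap.range (Matrix.mulVecLin A)) + nullity A
      = Fintype.card V := by
    rw [nullity, LinearMap.finrank_range_add_finrank_ker,
      Module.finrank_fintype_fun_eq_card]
  -- linear independence of two columns at an edge
  have hindep : ∀ u v : V, G.Adj u v →
      LinearIndependent ℝ ![(fun i => A i u), (fun i => A i v)] := by
    intro u v huv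
    rw [LinearIndependent.pair_iff]
    intro s t hst
    have h1 := congr_fun hst v
    have h2 := congr_fun hst u
    simp only [Pi.add_apply, Pi.smul_apply, smul_eq_mul, Pi.zero_apply] at h1 h2
    rw [hAdiag v] at h1
    rw [hAdiag u] at h2
    constructor
    · have := hAne v u huv.symm
      have hs : s * A v u = 0 := by linarith
      rcases mul_eq_zero.1 hs with h | h
      · exact h
      · exact absurd h this
    · have := hAne u v huv
      have ht : t * A u v = 0 := by linarith
      rcases mul_eq_zero.1 ht with h | h
      · exact h
      · exact absurd h this
  have hsub : ∀ u v : V, G.Adj u v →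
      span ℝ ({(fun i => A i u), (fun i => A i v)} : Set (V → ℝ))
        ≤ LinearMap.range (Matrix.mulVecLin A) := by
    intro u v _
    rw [Submodule.span_le]
    rintro z hz
    rcases hz with rfl | rfl
    · exact stmt17_col_mem_range G σ u
    · exact stmt17_col_mem_range G σ v
  constructor
  · intro hnull
    have hr2 : finrank ℝ (LinearMap.range (Matrix.mulVecLin A)) = 2 := by omega
    obtain ⟨u, v, huv⟩ : ∃ u v, G.Adj u v := by
      have hcard : G.edgeFinset.Nonempty := by
        rw [← Finset.card_pos, hE]; omega
      obtain ⟨e, he⟩ := hcard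
      rw [SimpleGraph.mem_edgeFinset] at he
      induction e using Sym2.ind with
      | _ a b => exact ⟨a, b, he⟩
    have hEQ : span ℝ ({(fun i => A i u), (fun i => A i v)} : Set (V → ℝ))
        = LinearMap.range (Matrix.mulVecLin A) := by
      apply Submodule.eq_of_le_of_finrank_le (hsub u v huv)
      rw [hr2, stmt17_span_pair_finrank (hindep u v huv)]
    have hcol : ∀ w : V, ∃ a b : ℝ, ∀ i, A i w = a * A i u + b * A i v := by
      intro w
      have hm := stmt17_col_mem_range G σ w
      rw [← hEQ] at hm
      obtain ⟨a, b, hab⟩ := Submodule.mem_span_pair.1 hm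
      refine ⟨a, b, fun i => ?_⟩
      have := congr_fun hab i
      simp only [Pi.add_apply, Pi.smul_apply, smul_eq_mul] at this
      exact this.symm
    have htri : ∀ w, A u w * A v w = 0 := by
      intro w
      obtain ⟨a, b, hab⟩ := hcol w
      have h1 : A u w = b * A u v := by have := hab u; rw [hAdiag u] at this; linarith
      have h2 : A v w = a * A v u := by
        have := hab v; rw [hAdiag v] at this; linarith
      have h3 : (0:ℝ) = a * A u w + b * A v w := by
        have := hab w
        rw [hAdiag w, hAsymm w u, hAsymm w v] at this
        linarith
      have hvu : A v u = A u v := hAsymm v u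
      have hab0 : a * b = 0 := by
        have hz : 2 * (a * b) * A u v = 0 := by
          rw [h1, h2, hvu] at h3; linarith [h3]
        rcases mul_eq_zero.1 hz with h | h
        · linarith
        · exact absurd h (hAne u v huv)
      calc A u w * A v w = (a * b) * (A u v * A u v) := by rw [h1, h2, hvu]; ring
      _ = 0 := by rw [hab0]; ring
    set X := G.neighborSet v with hXdef
    set Y := G.neighborSet u with hYdef
    have huX : u ∈ X := huv.symm
    have hvY : v ∈ Y := huv
    have hdisj : ∀ w, w ∈ X → w ∉ Y := by
      intro w hw hw'
      exact (mul_ne_zero (hAne u w hw') (hAne v w hw)) (htri w)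
    have hcover : ∀ w, w ∈ X ∨ w ∈ Y := by
      intro w
      by_contra hcon
      push_neg at hcon
      obtain ⟨hw1, hw2⟩ := hcon
      have hv0 : A v w = 0 := hA0 v w hw1
      have hu0 : A u w = 0 := hA0 u w hw2
      obtain ⟨a, b, hab⟩ := hcol w
      have ha : a = 0 := by
        have := hab v; rw [hAdiag v, hv0] at this
        have h' : a * A v u = 0 := by linarith
        rcases mul_eq_zero.1 h' with h | h
        · exact h
        · exact absurd h (hAne v u huv.symm)
      have hb : b = 0 := by
        have := hab u; rw [hAdiag u, hu0] at this
        have h' : b * A u v = 0 := by linarith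
        rcases mul_eq_zero.1 h' with h | h
        · exact h
        · exact absurd h (hAne u v huv)
      have hzero : ∀ i, A i w = 0 := by
        intro i; have := hab i; rw [ha, hb] at this; simpa using this
      have hwu : w ≠ u := by rintro rfl; exact hw1 huv.symm
      obtain ⟨p⟩ := hconn.preconnected w u
      cases p with
      | nil => exact hwu rfl
      | cons h q =>
          exact hAne w _ h (by rw [hAsymm]; exact hzero _)
    have hcolX : ∀ x ∈ X, ∃ a : ℝ, ∀ i, A i x = a * A i u := by
      intro x hx
      obtain ⟨a, b, hab⟩ := hcol x
      have hux : A u x = 0 := by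
        rcases mul_eq_zero.1 (htri x) with h | h
        · exact h
        · exact absurd h (hAne v x hx)
      have hb : b = 0 := by
        have := hab u; rw [hAdiag u, hux] at this
        have h' : b * A u v = 0 := by linarith
        rcases mul_eq_zero.1 h' with h | h
        · exact h
        · exact absurd h (hAne u v huv)
      refine ⟨a, fun i => ?_⟩
      have := hab i; rw [hb] at this; simpa using this
    have hcolY : ∀ y ∈ Y, ∃ b : ℝ, ∀ i, A i y = b * A i v := by
      intro y hy
      obtain ⟨a, b, hab⟩ := hcol y
      have hvy : A v y = 0 := by
        rcases mul_eq_zero.1 (htri y) with h | h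
        · exact absurd h (hAne u y hy)
        · exact h
      have ha : a = 0 := by
        have := hab v; rw [hAdiag v, hvy] at this
        have h' : a * A v u = 0 := by linarith
        rcases mul_eq_zero.1 h' with h | h
        · exact h
        · exact absurd h (hAne v u huv.symm)
      refine ⟨b, fun i => ?_⟩
      have := hab i; rw [ha] at this; simpa using this
    have hnadjY : ∀ y ∈ Y, ∀ y' ∈ Y, ¬ G.Adj y y' := by
      intro y hy y' hy' hadj
      obtain ⟨b, hb⟩ := hcolY y hy
      have h0 : A y' v = 0 := by
        by_cases hy'v : y' = v
        · rw [hy'v]; exact hAdiag v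
        · rw [hAsymm]
          exact hA0 v y' (fun h => hdisj y' h hy')
      have : A y' y = 0 := by rw [hb y', h0, mul_zero]
      exact hAne y' y hadj.symm this
    have hnadjX : ∀ x ∈ X, ∀ x' ∈ X, ¬ G.Adj x x' := by
      intro x hx x' hx' hadj
      obtain ⟨a, ha⟩ := hcolX x hx
      have h0 : A x' u = 0 := by
        by_cases hx'u : x' = u
        · rw [hx'u]; exact hAdiag u
        · rw [hAsymm]
          exact hA0 u x' (fun h => hdisj x' hx' h)
      have : A x' x = 0 := by rw [ha x', h0, mul_zero]
      exact hAne x' x hadj.symm this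
    have hadjXY : ∀ x ∈ X, ∀ y ∈ Y, G.Adj x y := by
      intro x hx y hy
      obtain ⟨a, ha⟩ := hcolX x hx
      have ha0 : a * A v u ≠ 0 := by rw [← ha v]; exact hAne v x hx
      have ha' : a ≠ 0 := fun h => ha0 (by rw [h, zero_mul])
      have hne0 : A y x ≠ 0 := by
        rw [ha y]
        exact mul_ne_zero ha' (by rw [hAsymm]; exact hAne u y hy)
      exact (hadj_of_ne y x hne0).symm
    have hNX : ∀ x ∈ X, G.neighborSet x = Y := by
      intro x hx; ext t
      constructor
      · intro ht
        rcases hcover t with h | h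
        · exact absurd ht (hnadjX x hx t h)
        · exact h
      · intro ht; exact hadjXY x hx t ht
    have hNY : ∀ y ∈ Y, G.neighborSet y = X := by
      intro y hy; ext t
      constructor
      · intro ht
        rcases hcover t with h | h
        · exact h
        · exact absurd ht (hnadjY y hy t h)
      · intro ht; exact (hadjXY t ht y hy).symm
    -- counting
    have hXfin : X.Finite := X.toFinite
    have hYfin : Y.Finite := Y.toFinite
    have hab_n : X.ncard + Y.ncard = Fintype.card V := by
      have hU : X ∪ Y = Set.univ := Set.eq_univ_of_forall (fun w => hcover w)
      have hd : Disjoint X Y := Set.disjoint_left.2 hdisj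
      have hcu := Set.ncard_union_eq hd hXfin hYfin
      rw [hU, Set.ncard_univ, Nat.card_eq_fintype_card] at hcu
      omega
    have hdegn : ∀ w, G.degree w = (G.neighborSet w).ncard := by
      intro w
      have hc : ((G.neighborFinset w : Finset V) : Set V) = G.neighborSet w := by
        ext t; simp
      have hcf := Set.ncard_coe_finset (G.neighborFinset w)
      rw [hc] at hcf
      rw [hcf]
      rfl
    have hXcard : (Finset.univ.filter (fun w => w ∈ X)).card = X.ncard := by
      rw [← Set.ncard_coe_finset]
      congr 1
      ext w; simp
    have hYcard : (Finset.univ.filter (fun w => ¬ w ∈ X)).card = Y.ncard := by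
      rw [← Set.ncard_coe_finset]
      congr 1
      ext w
      simp only [Finset.coe_filter, Finset.mem_univ, true_and, Set.mem_setOf_eq]
      constructor
      · intro h; exact (hcover w).resolve_left h
      · intro h h'; exact hdisj w h' h
    have hsum2 : ∑ w : V, G.degree w = X.ncard * Y.ncard + Y.ncard * X.ncard := by
      rw [← Finset.sum_filter_add_sum_filter_not Finset.univ (fun w => w ∈ X)]
      rw [Finset.sum_const_nat (m := Y.ncard) ?_, Finset.sum_const_nat (m := X.ncard) ?_,
        hXcard, hYcard]
      · intro w hw
        simp only [Finset.mem_filter] at hw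
        have hwY : w ∈ Y := (hcover w).resolve_left hw.2
        rw [hdegn w, hNY w hwY]
      · intro w hw
        simp only [Finset.mem_filter] at hw
        rw [hdegn w, hNX w hw.2]
    have hmul : X.ncard * Y.ncard = Fintype.card V := by
      have hs := SimpleGraph.sum_degrees_eq_twice_card_edges G
      rw [hsum2, hE] at hs
      have : 2 * (X.ncard * Y.ncard) = 2 * Fintype.card V := by
        rw [Nat.mul_comm Y.ncard X.ncard] at hs; omega
      omega
    have hX1 : 1 ≤ X.ncard := (Set.ncard_pos hXfin).2 ⟨u, huX⟩
    have hY1 : 1 ≤ Y.ncard := (Set.ncard_pos hYfin).2 ⟨v, hvY⟩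
    obtain ⟨a', ha'⟩ : ∃ a', X.ncard = a' + 1 := ⟨X.ncard - 1, by omega⟩
    obtain ⟨b', hb'⟩ : ∃ b', Y.ncard = b' + 1 := ⟨Y.ncard - 1, by omega⟩
    have hab1 : a' * b' = 1 := by
      have h1 : (a' + 1) * (b' + 1) = (a' + 1) + (b' + 1) := by
        rw [← ha', ← hb', hmul, hab_n]
      have h2 : a' * b' + (a' + b' + 1) = 1 + (a' + b' + 1) := by
        calc a' * b' + (a' + b' + 1) = (a' + 1) * (b' + 1) := by ring
        _ = 1 + (a' + b' + 1) := by rw [h1]; ring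
      exact Nat.add_right_cancel h2
    have ha2 : X.ncard = 2 := by
      have := Nat.eq_one_of_mul_eq_one_right hab1; omega
    have hb2 : Y.ncard = 2 := by
      have := Nat.eq_one_of_mul_eq_one_left hab1; omega
    have hn4 : Fintype.card V = 4 := by omega
    refine ⟨hn4, ?_, ?_⟩
    · intro w
      rcases hcover w with h | h
      · rw [hNX w h]; exact hb2
      · rw [hNY w h]; exact ha2
    -- balanced
    obtain ⟨p, hpu, hXeq⟩ := stmt17_pair_other ha2 huX
    obtain ⟨q, hqv, hYeq⟩ := stmt17_pair_other hb2 hvY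
    have hpX : p ∈ X := by rw [hXeq]; right; rfl
    have hqY : q ∈ Y := by rw [hYeq]; right; rfl
    have hadj_vp : G.Adj v p := hpX
    have hadj_uq : G.Adj u q := hqY
    have hvu : v ≠ u := huv.ne'
    have hvpne : v ≠ p := fun h => hdisj p hpX (h ▸ hvY)
    have hqu : q ≠ u := fun h => hdisj u huX (h ▸ hqY)
    have hqp : q ≠ p := fun h => hdisj q (h ▸ hpX) hqY
    set θ : V → ℝ := fun w =>
      if w = u then 1 else if w = p then A u v * A v p else if w = v then A u v else A u q
      with hθdef
    have hθu : θ u = 1 := by simp [hθdef]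
    have hθp : θ p = A u v * A v p := by simp [hθdef, hpu]
    have hθv : θ v = A u v := by simp [hθdef, hvu, hvpne]
    have hθq : θ q = A u q := by simp [hθdef, hqu, hqp, hqv]
    have hθsq : ∀ w, θ w * θ w = 1 := by
      intro w
      rw [hθdef]
      simp only []
      split_ifs
      · norm_num
      · nlinarith [hAsq u v huv, hAsq v p hadj_vp]
      · exact hAsq u v huv
      · exact hAsq u q hadj_uq
    obtain ⟨α, hα⟩ := hcolX p hpX
    have hXYe : ∀ s ∈ X, ∀ t ∈ Y, A s t = θ s * θ t := by
      intro s hs t ht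
      rw [hXeq] at hs
      rw [hYeq] at ht
      simp only [Set.mem_insert_iff, Set.mem_singleton_iff] at hs ht
      rcases hs with hs | hs <;> rcases ht with ht | ht <;> rw [hs, ht]
      · rw [hθu, hθv]; ring
      · rw [hθu, hθq]; ring
      · rw [hθp, hθv, hAsymm p v,
          show A u v * A v p * A u v = (A u v * A u v) * A v p from by ring,
          hAsq u v huv, one_mul]
      · rw [hθp, hθq, hAsymm p q, hα q, hα v, hAsymm v u, hAsymm q u,
          show A u v * (α * A u v) * A u q = (A u v * A u v) * (α * A u q) from by ring,
          hAsq u v huv, one_mul]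
    have hedge : ∀ s t, G.Adj s t → σ s t = θ s * θ t := by
      intro s t hst
      rw [← hAadj s t hst]
      rcases hcover s with hs | hs <;> rcases hcover t with ht | ht
      · exact absurd hst (hnadjX s hs t ht)
      · exact hXYe s hs t ht
      · rw [hAsymm s t, mul_comm]; exact hXYe t ht s hs
      · exact absurd hst (hnadjY s hs t ht)
    intro u0 w hw
    rw [stmt17_walkSign_theta G σ θ hθsq hedge w]
    exact hθsq u0
  · rintro ⟨hn4, hreg, hbal⟩
    obtain ⟨u⟩ := hne
    obtain ⟨v, y, hvy, hNu⟩ := Set.ncard_eq_two.1 (hreg u)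
    have hvNu : v ∈ G.neighborSet u := by rw [hNu]; left; rfl
    have hyNu : y ∈ G.neighborSet u := by rw [hNu]; right; rfl
    have huv : G.Adj u v := hvNu
    have huy : G.Adj u y := hyNu
    obtain ⟨x, hxu, hNv⟩ := stmt17_pair_other (hreg v) (huv.symm : u ∈ G.neighborSet v)
    have hxNv : x ∈ G.neighborSet v := by rw [hNv]; right; rfl
    have hvx : G.Adj v x := hxNv
    have hxy : x ≠ y := by
      intro hh
      subst hh
      have hNy : G.neighborSet x = {u, v} := by
        refine (Set.eq_of_subset_of_ncard_le ?_ ?_ (Set.toFinite _)).symm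
        · intro t ht
          simp only [Set.mem_insert_iff, Set.mem_singleton_iff] at ht
          rcases ht with rfl | rfl
          · exact huy.symm
          · exact hvx.symm
        · rw [hreg x, Set.ncard_pair huv.ne]
      obtain ⟨w, hw⟩ : ∃ w, w ∉ ({u, v, x} : Set V) := by
        by_contra hcon
        push_neg at hcon
        have hle : (Set.univ : Set V).ncard ≤ ({u, v, x} : Set V).ncard :=
          Set.ncard_le_ncard (fun t _ => hcon t) (Set.toFinite _)
        rw [Set.ncard_univ, Nat.card_eq_fintype_card, hn4] at hle
        have h3 : ({u, v, x} : Set V).ncard ≤ 3 := by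
          refine (Set.ncard_insert_le _ _).trans ?_
          have := Set.ncard_insert_le v ({x} : Set V)
          rw [Set.ncard_singleton] at this
          omega
        omega
      simp only [Set.mem_insert_iff, Set.mem_singleton_iff, not_or] at hw
      obtain ⟨hwu, hwv, hwx⟩ := hw
      have huniv : (Set.univ : Set V) = {u, v, x, w} := by
        refine (Set.eq_of_subset_of_ncard_le (Set.subset_univ _) ?_ (Set.toFinite _)).symm
        rw [Set.ncard_univ, Nat.card_eq_fintype_card, hn4]
        have h4 : ({u, v, x, w} : Set V).ncard = 4 := by
          rw [Set.ncard_insert_of_notMem, Set.ncard_insert_of_notMem, Set.ncard_pair]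
          · exact fun h => hwx h.symm
          · intro hmem
            simp only [Set.mem_insert_iff, Set.mem_singleton_iff] at hmem
            rcases hmem with h | h
            · exact hvx.ne h
            · exact hwv h.symm
          · intro hmem
            simp only [Set.mem_insert_iff, Set.mem_singleton_iff] at hmem
            rcases hmem with h | h | h
            · exact huv.ne h
            · exact huy.ne h
            · exact hwu h.symm
        omega
      obtain ⟨t, ht⟩ : (G.neighborSet w).Nonempty :=
        Set.nonempty_of_ncard_ne_zero (by rw [hreg w]; omega)
      have htadj : G.Adj w t := ht
      have htmem : t ∈ ({u, v, x, w} : Set V) := by rw [← huniv]; trivial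
      simp only [Set.mem_insert_iff, Set.mem_singleton_iff] at htmem
      rcases htmem with rfl | rfl | rfl | rfl
      · have : w ∈ G.neighborSet t := htadj.symm
        rw [hNu] at this
        simp only [Set.mem_insert_iff, Set.mem_singleton_iff] at this
        rcases this with h | h
        · exact hwv h
        · exact hwx h
      · have : w ∈ G.neighborSet t := htadj.symm
        rw [hNv] at this
        simp only [Set.mem_insert_iff, Set.mem_singleton_iff] at this
        rcases this with h | h
        · exact hwu h
        · exact hwx h
      · have : w ∈ G.neighborSet t := htadj.symm
        rw [hNy] at this
        simp only [Set.mem_insert_iff, Set.mem_singleton_iff] at this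
        rcases this with h | h
        · exact hwu h
        · exact hwv h
      · exact G.irrefl htadj
    -- distinctness and remaining structure
    have hxv : x ≠ v := hvx.ne'
    have hnux : ¬ G.Adj u x := by
      intro h
      have : x ∈ G.neighborSet u := h
      rw [hNu] at this
      simp only [Set.mem_insert_iff, Set.mem_singleton_iff] at this
      rcases this with h' | h'
      · exact hxv h'
      · exact hxy h'
    have huniv4 : (Set.univ : Set V) = {u, v, x, y} := by
      refine (Set.eq_of_subset_of_ncard_le (Set.subset_univ _) ?_ (Set.toFinite _)).symm
      rw [Set.ncard_univ, Nat.card_eq_fintype_card, hn4]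
      have h4 : ({u, v, x, y} : Set V).ncard = 4 := by
        rw [Set.ncard_insert_of_notMem, Set.ncard_insert_of_notMem, Set.ncard_pair hxy]
        · intro hmem
          simp only [Set.mem_insert_iff, Set.mem_singleton_iff] at hmem
          rcases hmem with h | h
          · exact hxv h.symm
          · exact hvy h
        · intro hmem
          simp only [Set.mem_insert_iff, Set.mem_singleton_iff] at hmem
          rcases hmem with h | h | h
          · exact huv.ne h
          · exact hxu h.symm
          · exact huy.ne h
      omega
    have hUniv : ∀ w : V, w = u ∨ w = v ∨ w = x ∨ w = y := by
      intro w
      have : w ∈ ({u, v, x, y} : Set V) := by rw [← huniv4]; trivial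
      simpa using this
    -- second neighbor of x is y
    obtain ⟨t, htv, hNx⟩ := stmt17_pair_other (hreg x) (hvx.symm : v ∈ G.neighborSet x)
    have htNx : t ∈ G.neighborSet x := by rw [hNx]; right; rfl
    have hxt : G.Adj x t := htNx
    have hty : t = y := by
      rcases hUniv t with rfl | rfl | rfl | rfl
      · exact absurd hxt.symm hnux
      · exact absurd rfl htv
      · exact absurd rfl (G.ne_of_adj hxt).symm
      · rfl
    rw [hty] at hxt hNx
    have hxyadj : G.Adj x y := hxt
    have hNx' : G.neighborSet x = {v, y} := hNx
    have hNy : G.neighborSet y = {u, x} := by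
      refine (Set.eq_of_subset_of_ncard_le ?_ ?_ (Set.toFinite _)).symm
      · intro s hs
        simp only [Set.mem_insert_iff, Set.mem_singleton_iff] at hs
        rcases hs with rfl | rfl
        · exact huy.symm
        · exact hxyadj.symm
      · rw [hreg y, Set.ncard_pair (fun h => hxu h.symm)]
    have hnvy : ¬ G.Adj v y := by
      intro h
      have : y ∈ G.neighborSet v := h
      rw [hNv] at this
      simp only [Set.mem_insert_iff, Set.mem_singleton_iff] at this
      rcases this with h' | h'
      · exact huy.ne h'.symm
      · exact hxy h'.symm
    -- the 4-cycle is balanced: extract the product identity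
    have hprod : A u v * A v x * A x y * A y u = 1 := by
      have hW : walkSign G σ
          (SimpleGraph.Walk.cons huv (SimpleGraph.Walk.cons hvx
            (SimpleGraph.Walk.cons hxyadj (SimpleGraph.Walk.cons huy.symm
              SimpleGraph.Walk.nil)))) = σ u v * (σ v x * (σ x y * (σ y u * 1))) := by
        simp [walkSign]
      have hcyc : (SimpleGraph.Walk.cons huv (SimpleGraph.Walk.cons hvx
            (SimpleGraph.Walk.cons hxyadj (SimpleGraph.Walk.cons huy.symm
              SimpleGraph.Walk.nil)))).IsCycle := by
        have n1 : u ≠ v := huv.ne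
        have n2 : v ≠ x := hvx.ne
        have n3 : x ≠ y := hxy
        have n4 : y ≠ u := fun h => huy.ne h.symm
        have n1' : v ≠ u := n1.symm
        have n2' : x ≠ v := n2.symm
        have n3' : y ≠ x := n3.symm
        have n4' : u ≠ y := n4.symm
        have n5 : u ≠ x := fun h => hxu h.symm
        have n5' : x ≠ u := hxu
        have n6 : v ≠ y := hvy
        have n6' : y ≠ v := hvy.symm
        rw [SimpleGraph.Walk.isCycle_def]
        refine ⟨?_, by simp, ?_⟩
        · rw [SimpleGraph.Walk.isTrail_def]
          simp [Sym2.eq_iff]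
          tauto
        · simp
          tauto
      have hb := hbal u _ hcyc
      rw [hW] at hb
      rw [hAadj u v huv, hAadj v x hvx, hAadj x y hxyadj, hAadj y u huy.symm]
      calc σ u v * σ v x * σ x y * σ y u = σ u v * (σ v x * (σ x y * (σ y u * 1))) := by ring
      _ = 1 := hb
    -- column relations
    have e1 := hApm u v huv
    have e2 := hApm v x hvx
    have e3 := hApm x y hxyadj
    have e4 := hApm y u huy.symm
    have hcx : ∀ i, A i x = (A v x * A v u) * A i u := by
      intro i
      rcases hUniv i with h | h | h | h <;> rw [h]
      · rw [hA0 _ _ hnux, hAdiag, mul_zero]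
      · rw [show (A v x * A v u) * A v u = A v x * (A v u * A v u) from by ring,
          hAsq v u huv.symm, mul_one]
      · rw [hAdiag, hAsymm x u, hA0 u x hnux, mul_zero]
      · rw [hAsymm y x, hAsymm v u]
        rcases e1 with e1 | e1 <;> rcases e2 with e2 | e2 <;>
          rcases e3 with e3 | e3 <;> rcases e4 with e4 | e4 <;>
          rw [e1, e2, e3, e4] at hprod ⊢ <;> (revert hprod; norm_num)
    have hcy : ∀ i, A i y = (A u y * A u v) * A i v := by
      intro i
      rcases hUniv i with h | h | h | h <;> rw [h]
      · rw [show (A u y * A u v) * A u v = A u y * (A u v * A u v) from by ring,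
          hAsq u v huv, mul_one]
      · rw [hA0 _ _ hnvy, hAdiag, mul_zero]
      · rw [hAsymm u y, hAsymm x v]
        rcases e1 with e1 | e1 <;> rcases e2 with e2 | e2 <;>
          rcases e3 with e3 | e3 <;> rcases e4 with e4 | e4 <;>
          rw [e1, e2, e3, e4] at hprod ⊢ <;> (revert hprod; norm_num)
      · rw [hAdiag, hAsymm y v, hA0 v y hnvy, mul_zero]
    -- rank bound
    have hrange_le : LinearMap.range (Matrix.mulVecLin A)
        ≤ span ℝ ({(fun i => A i u), (fun i => A i v)} : Set (V → ℝ)) := by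
      rw [Matrix.range_mulVecLin, Submodule.span_le]
      rintro z ⟨w, rfl⟩
      rcases hUniv w with h | h | h | h <;> subst h
      · exact Submodule.subset_span (Set.mem_insert _ _)
      · exact Submodule.subset_span (Set.mem_insert_of_mem _ rfl)
      · have hz : A.transpose w = (A v w * A v u) • (fun i => A i u) := by
          funext i
          simp only [Matrix.transpose_apply, Pi.smul_apply, smul_eq_mul]
          exact hcx i
        rw [show A.col w = A.transpose w from rfl, hz]
        exact Submodule.smul_mem _ _ (Submodule.subset_span (Set.mem_insert _ _))
      · have hz : A.transpose w = (A u w * A u v) • (fun i => A i v) := by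
          funext i
          simp only [Matrix.transpose_apply, Pi.smul_apply, smul_eq_mul]
          exact hcy i
        rw [show A.col w = A.transpose w from rfl, hz]
        exact Submodule.smul_mem _ _ (Submodule.subset_span (Set.mem_insert_of_mem _ rfl))
    have hfr_le : finrank ℝ (LinearMap.range (Matrix.mulVecLin A)) ≤ 2 := by
      have h := Submodule.finrank_mono hrange_le
      rwa [stmt17_span_pair_finrank (hindep u v huv)] at h
    have hfr_ge : 2 ≤ finrank ℝ (LinearMap.range (Matrix.mulVecLin A)) := by
      have h := Submodule.finrank_mono (hsub u v huv)
      rwa [stmt17_span_pair_finrank (hindep u v huv)] at h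
    omega
end
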